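/- arXiv:1710.03527 — 5 statements merged into one kernel-verified Lean document; each statement's English description precedes it below -/
import Mathlib

section
/- Let d ≥ 1 and let u : ℝ × ℝ → ℝ^d be a smooth (C^∞) function satisfying the vmKdV equation u_t + (3/2)‖u‖² u_x + u_xxx = 0 at every point (x,t). Then the pointwise conservation law ∂_t( (1/2)‖u_x‖² − (1/8)‖u‖⁴ ) = ∂_x( (1/8)‖u‖⁶ − ‖u‖²‖u_x‖² − (1/2)(u·u_x)² − u_x·u_xxx + (1/2)‖u_xx‖² + (1/2)‖u‖²(u·u_xx) ) holds at every point (x,t). -/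
open Real MeasureTheory intervalIntegral InnerProductSpace ContDiff

/-- Partial derivative in the first (space) variable. -/
noncomputable def pdx {E : Type*} [NormedAddCommGroup E] [NormedSpace ℝ E]
    (u : ℝ → ℝ → E) : ℝ → ℝ → E := fun x t => deriv (fun y => u y t) x

/-- Partial derivative in the second (time) variable. -/
noncomputable def pdt {E : Type*} [NormedAddCommGroup E] [NormedSpace ℝ E]
    (u : ℝ → ℝ → E) : ℝ → ℝ → E := fun x t => deriv (fun s => u x s) t

/-- The vectorial modified KdV equation `u_t + (3/2)‖u‖² u_x + u_xxx = 0`. -/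
def IsVmKdV {d : ℕ} (u : ℝ → ℝ → EuclideanSpace ℝ (Fin d)) : Prop :=
  ∀ x t : ℝ,
    pdt u x t + ((3 : ℝ) / 2 * ‖u x t‖ ^ 2) • pdx u x t + pdx (pdx (pdx u)) x t = 0


open Function in
section
variable {E : Type*} [NormedAddCommGroup E] [NormedSpace ℝ E]

lemma hasDerivAt_pdx' {v : ℝ → ℝ → E} (hv : ContDiff ℝ ∞ (uncurry v)) (x t : ℝ) :
    HasDerivAt (fun y => v y t) (fderiv ℝ (uncurry v) (x, t) (1, 0)) x := by
  have h1 : HasDerivAt (fun y : ℝ => ((y, t) : ℝ × ℝ)) ((1 : ℝ), (0 : ℝ)) x :=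
    (hasDerivAt_id x).prodMk (hasDerivAt_const x t)
  have h2 : HasFDerivAt (uncurry v) (fderiv ℝ (uncurry v) (x, t)) (x, t) :=
    (hv.differentiable (by simp)).differentiableAt.hasFDerivAt
  exact h2.comp_hasDerivAt x h1

lemma hasDerivAt_pdt' {v : ℝ → ℝ → E} (hv : ContDiff ℝ ∞ (uncurry v)) (x t : ℝ) :
    HasDerivAt (fun s => v x s) (fderiv ℝ (uncurry v) (x, t) (0, 1)) t := by
  have h1 : HasDerivAt (fun s : ℝ => ((x, s) : ℝ × ℝ)) ((0 : ℝ), (1 : ℝ)) t :=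
    (hasDerivAt_const t x).prodMk (hasDerivAt_id t)
  have h2 : HasFDerivAt (uncurry v) (fderiv ℝ (uncurry v) (x, t)) (x, t) :=
    (hv.differentiable (by simp)).differentiableAt.hasFDerivAt
  exact h2.comp_hasDerivAt t h1

lemma pdx_eq' {v : ℝ → ℝ → E} (hv : ContDiff ℝ ∞ (uncurry v)) (x t : ℝ) :
    pdx v x t = fderiv ℝ (uncurry v) (x, t) (1, 0) := (hasDerivAt_pdx' hv x t).deriv

lemma pdt_eq' {v : ℝ → ℝ → E} (hv : ContDiff ℝ ∞ (uncurry v)) (x t : ℝ) :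
    pdt v x t = fderiv ℝ (uncurry v) (x, t) (0, 1) := (hasDerivAt_pdt' hv x t).deriv

lemma hasDerivAt_x {v : ℝ → ℝ → E} (hv : ContDiff ℝ ∞ (uncurry v)) (x t : ℝ) :
    HasDerivAt (fun y => v y t) (pdx v x t) x := by
  rw [pdx_eq' hv]; exact hasDerivAt_pdx' hv x t

lemma hasDerivAt_t {v : ℝ → ℝ → E} (hv : ContDiff ℝ ∞ (uncurry v)) (x t : ℝ) :
    HasDerivAt (fun s => v x s) (pdt v x t) t := by
  rw [pdt_eq' hv]; exact hasDerivAt_pdt' hv x t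

lemma contDiff_fderiv_apply {F : ℝ × ℝ → E} (hF : ContDiff ℝ ∞ F) (e : ℝ × ℝ) :
    ContDiff ℝ ∞ (fun p => fderiv ℝ F p e) :=
  (hF.fderiv_right (le_refl ∞)).clm_apply contDiff_const

lemma contDiff_pdx {v : ℝ → ℝ → E} (hv : ContDiff ℝ ∞ (uncurry v)) :
    ContDiff ℝ ∞ (uncurry (pdx v)) := by
  have : uncurry (pdx v) = fun p : ℝ × ℝ => fderiv ℝ (uncurry v) p (1, 0) := by
    funext p; cases p with | mk a b => exact pdx_eq' hv a b
  rw [this]; exact contDiff_fderiv_apply hv _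

lemma contDiff_pdt {v : ℝ → ℝ → E} (hv : ContDiff ℝ ∞ (uncurry v)) :
    ContDiff ℝ ∞ (uncurry (pdt v)) := by
  have : uncurry (pdt v) = fun p : ℝ × ℝ => fderiv ℝ (uncurry v) p (0, 1) := by
    funext p; cases p with | mk a b => exact pdt_eq' hv a b
  rw [this]; exact contDiff_fderiv_apply hv _

lemma fderiv_fderiv_apply {F : ℝ × ℝ → E} (hF : ContDiff ℝ ∞ F) (e q w : ℝ × ℝ) :
    fderiv ℝ (fun p => fderiv ℝ F p e) q w = fderiv ℝ (fderiv ℝ F) q w e := by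
  have hd : HasFDerivAt (fderiv ℝ F) (fderiv ℝ (fderiv ℝ F) q) q :=
    (((hF.fderiv_right (m := ∞) (le_refl ∞)).differentiable (by simp)) q).hasFDerivAt
  have h := ((ContinuousLinearMap.apply ℝ E e).hasFDerivAt.comp q hd).fderiv
  have := congrArg (fun L : (ℝ × ℝ) →L[ℝ] E => L w) h
  simpa [Function.comp_def] using this

lemma clairaut {v : ℝ → ℝ → E} (hv : ContDiff ℝ ∞ (uncurry v)) (x t : ℝ) :
    pdt (pdx v) x t = pdx (pdt v) x t := by
  have h1 : pdt (pdx v) x t = fderiv ℝ (fderiv ℝ (uncurry v)) (x, t) (0, 1) (1, 0) := by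
    rw [pdt_eq' (contDiff_pdx hv)]
    have : uncurry (pdx v) = fun p : ℝ × ℝ => fderiv ℝ (uncurry v) p (1, 0) := by
      funext p; cases p with | mk a b => exact pdx_eq' hv a b
    rw [this, fderiv_fderiv_apply hv]
  have h2 : pdx (pdt v) x t = fderiv ℝ (fderiv ℝ (uncurry v)) (x, t) (1, 0) (0, 1) := by
    rw [pdx_eq' (contDiff_pdt hv)]
    have : uncurry (pdt v) = fun p : ℝ × ℝ => fderiv ℝ (uncurry v) p (0, 1) := by
      funext p; cases p with | mk a b => exact pdt_eq' hv a b
    rw [this, fderiv_fderiv_apply hv]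
  rw [h1, h2]
  exact ((hv.contDiffAt).isSymmSndFDerivAt (by simp; exact WithTop.coe_le_coe.2 le_top) _ _).symm

end

open Function in
theorem vmkdv_energy_conservation_law (d : ℕ) (hd : 1 ≤ d)
    (u : ℝ → ℝ → EuclideanSpace ℝ (Fin d))
    (hu : ContDiff ℝ ∞ (Function.uncurry u))
    (hsol : IsVmKdV u) :
    ∀ x t : ℝ,
      deriv (fun s => (1 : ℝ) / 2 * ‖pdx u x s‖ ^ 2 - (1 : ℝ) / 8 * ‖u x s‖ ^ 4) t
        = deriv (fun y =>
            (1 : ℝ) / 8 * ‖u y t‖ ^ 6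
              - ‖u y t‖ ^ 2 * ‖pdx u y t‖ ^ 2
              - (1 : ℝ) / 2 * ⟪u y t, pdx u y t⟫_ℝ ^ 2
              - ⟪pdx u y t, pdx (pdx (pdx u)) y t⟫_ℝ
              + (1 : ℝ) / 2 * ‖pdx (pdx u) y t‖ ^ 2
              + (1 : ℝ) / 2 * ‖u y t‖ ^ 2 * ⟪u y t, pdx (pdx u) y t⟫_ℝ) x := by
  intro x t
  have h0 : ContDiff ℝ ∞ (uncurry u) := hu
  have h1 := contDiff_pdx h0
  have h2 := contDiff_pdx h1
  have h3 := contDiff_pdx h2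
  -- the PDE solved for `pdt u`
  have hE : ∀ y s : ℝ, pdt u y s
      = -(((3 : ℝ) / 2 * ‖u y s‖ ^ 2) • pdx u y s) - pdx (pdx (pdx u)) y s := by
    intro y s
    have h' : pdt u y s + (((3 : ℝ) / 2 * ‖u y s‖ ^ 2) • pdx u y s
        + pdx (pdx (pdx u)) y s) = 0 := by rw [← add_assoc]; exact hsol y s
    rw [eq_neg_of_add_eq_zero_left h', neg_add, ← sub_eq_add_neg]
  -- spatial derivatives at (x,t)
  have hx0 := hasDerivAt_x h0 x t
  have hx1 := hasDerivAt_x h1 x t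
  have hx2 := hasDerivAt_x h2 x t
  have hx3 := hasDerivAt_x h3 x t
  -- time derivatives at (x,t)
  have ht0 := hasDerivAt_t h0 x t
  have ht1 := hasDerivAt_t h1 x t
  -- mixed derivative via Clairaut and the PDE
  have hmix : pdt (pdx u) x t
      = -((((3 : ℝ) / 2 * ⟪u x t, u x t⟫_ℝ) • pdx (pdx u) x t)
          + (((3 : ℝ) / 2 * (⟪u x t, pdx u x t⟫_ℝ + ⟪pdx u x t, u x t⟫_ℝ)) • pdx u x t))
        - pdx (pdx (pdx (pdx u))) x t := by
    rw [clairaut h0]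
    have hfun : (fun y => pdt u y t)
        = fun y => -(((3 : ℝ) / 2 * ⟪u y t, u y t⟫_ℝ) • pdx u y t)
            - pdx (pdx (pdx u)) y t := by
      funext y; rw [hE y t, real_inner_self_eq_norm_sq]
    have hD : HasDerivAt
        (fun y => -(((3 : ℝ) / 2 * ⟪u y t, u y t⟫_ℝ) • pdx u y t)
            - pdx (pdx (pdx u)) y t)
        (-((((3 : ℝ) / 2 * ⟪u x t, u x t⟫_ℝ) • pdx (pdx u) x t)
          + (((3 : ℝ) / 2 * (⟪u x t, pdx u x t⟫_ℝ + ⟪pdx u x t, u x t⟫_ℝ)) • pdx u x t))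
        - pdx (pdx (pdx (pdx u))) x t) x :=
      ((((hx0.inner ℝ hx0).const_mul ((3 : ℝ) / 2)).smul hx1).neg).sub hx3
    show deriv (fun y => pdt u y t) x = _
    rw [hfun]
    exact hD.deriv
  -- rewrite both sides in terms of inner products
  have hLfun : (fun s => (1 : ℝ) / 2 * ‖pdx u x s‖ ^ 2 - (1 : ℝ) / 8 * ‖u x s‖ ^ 4)
      = fun s => (1 : ℝ) / 2 * ⟪pdx u x s, pdx u x s⟫_ℝ
          - (1 : ℝ) / 8 * ⟪u x s, u x s⟫_ℝ ^ 2 := by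
    funext s; simp only [real_inner_self_eq_norm_sq]; ring
  have hRfun : (fun y =>
            (1 : ℝ) / 8 * ‖u y t‖ ^ 6
              - ‖u y t‖ ^ 2 * ‖pdx u y t‖ ^ 2
              - (1 : ℝ) / 2 * ⟪u y t, pdx u y t⟫_ℝ ^ 2
              - ⟪pdx u y t, pdx (pdx (pdx u)) y t⟫_ℝ
              + (1 : ℝ) / 2 * ‖pdx (pdx u) y t‖ ^ 2
              + (1 : ℝ) / 2 * ‖u y t‖ ^ 2 * ⟪u y t, pdx (pdx u) y t⟫_ℝ)
      = fun y =>
            (1 : ℝ) / 8 * ⟪u y t, u y t⟫_ℝ ^ 3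
              - ⟪u y t, u y t⟫_ℝ * ⟪pdx u y t, pdx u y t⟫_ℝ
              - (1 : ℝ) / 2 * ⟪u y t, pdx u y t⟫_ℝ ^ 2
              - ⟪pdx u y t, pdx (pdx (pdx u)) y t⟫_ℝ
              + (1 : ℝ) / 2 * ⟪pdx (pdx u) y t, pdx (pdx u) y t⟫_ℝ
              + (1 : ℝ) / 2 * (⟪u y t, u y t⟫_ℝ * ⟪u y t, pdx (pdx u) y t⟫_ℝ) := by
    funext y; simp only [real_inner_self_eq_norm_sq]; ring
  have hL := (((ht1.inner ℝ ht1).const_mul ((1 : ℝ) / 2)).sub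
      (((ht0.inner ℝ ht0).pow 2).const_mul ((1 : ℝ) / 8))).deriv
  have hR := ((((((((hx0.inner ℝ hx0).pow 3).const_mul ((1 : ℝ) / 8)).sub
      ((hx0.inner ℝ hx0).mul (hx1.inner ℝ hx1))).sub
      (((hx0.inner ℝ hx1).pow 2).const_mul ((1 : ℝ) / 2))).sub
      (hx1.inner ℝ hx3)).add
      ((hx2.inner ℝ hx2).const_mul ((1 : ℝ) / 2))).add
      (((hx0.inner ℝ hx0).mul (hx0.inner ℝ hx2)).const_mul ((1 : ℝ) / 2))).deriv
  simp only [Pi.sub_def, Pi.add_def, Pi.mul_def, Pi.pow_def] at hL hR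
  rw [hLfun, hRfun, hL, hR, hmix, hE x t, real_inner_self_eq_norm_sq]
  simp only [inner_sub_left, inner_sub_right, inner_add_left, inner_add_right,
    inner_neg_left, inner_neg_right, real_inner_smul_left, real_inner_smul_right,
    real_inner_self_eq_norm_sq]
  simp only [real_inner_comm (pdx u x t) (u x t),
    real_inner_comm (pdx (pdx u) x t) (u x t),
    real_inner_comm (pdx (pdx (pdx u)) x t) (u x t),
    real_inner_comm (pdx (pdx (pdx (pdx u))) x t) (u x t),
    real_inner_comm (pdx (pdx u) x t) (pdx u x t),
    real_inner_comm (pdx (pdx (pdx u)) x t) (pdx u x t),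
    real_inner_comm (pdx (pdx (pdx (pdx u))) x t) (pdx u x t),
    real_inner_comm (pdx (pdx (pdx u)) x t) (pdx (pdx u) x t),
    real_inner_comm (pdx (pdx (pdx (pdx u))) x t) (pdx (pdx u) x t),
    real_inner_comm (pdx (pdx (pdx (pdx u))) x t) (pdx (pdx (pdx u)) x t)]
  ring
end

section
/- Let d ≥ 1 and let u : ℝ × ℝ → ℝ^d be a smooth (C^∞) solution of the vmKdV equation u_t + (3/2)‖u‖² u_x + u_xxx = 0 that is 1-periodic in x, i.e. u(x+1,t) = u(x,t) for all x,t. Then the energy functional F₄(u)(t) = ∫₀¹ (1/2)‖u_x(x,t)‖² − (1/8)‖u(x,t)‖⁴ dx is constant in t; equivalently, its time derivative vanishes for every t. -/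
open Real MeasureTheory intervalIntegral InnerProductSpace ContDiff

open scoped RealInnerProductSpace

section Aux

variable {E : Type*} [NormedAddCommGroup E] [NormedSpace ℝ E]

lemma vmkdv_aux_one_le : ((1 : ℕ∞) : WithTop ℕ∞) ≤ ∞ := by exact_mod_cast le_top

lemma vmkdv_aux_add_one : (∞ + 1 : WithTop ℕ∞) ≤ ∞ := by norm_cast

lemma vmkdv_hasDerivAt_slice_x {w : ℝ → ℝ → E} (hw : ContDiff ℝ ∞ (Function.uncurry w))
    (x t : ℝ) : HasDerivAt (fun y => w y t) (pdx w x t) x := by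
  have h : DifferentiableAt ℝ (fun y => w y t) x := by
    have : (fun y => w y t) = Function.uncurry w ∘ (fun y => (y, t)) := rfl
    rw [this]
    exact (hw.differentiable (by simp) (x, t)).comp x
      (differentiableAt_id.prodMk (differentiableAt_const t))
  exact h.hasDerivAt

lemma vmkdv_hasDerivAt_slice_t {w : ℝ → ℝ → E} (hw : ContDiff ℝ ∞ (Function.uncurry w))
    (x t : ℝ) : HasDerivAt (fun s => w x s) (pdt w x t) t := by
  have h : DifferentiableAt ℝ (fun s => w x s) t := by
    have : (fun s => w x s) = Function.uncurry w ∘ (fun s => (x, s)) := rfl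
    rw [this]
    exact (hw.differentiable (by simp) (x, t)).comp t
      ((differentiableAt_const x).prodMk differentiableAt_id)
  exact h.hasDerivAt

lemma vmkdv_pdx_eq_fderiv {w : ℝ → ℝ → E} (hw : ContDiff ℝ ∞ (Function.uncurry w))
    (x t : ℝ) : pdx w x t = fderiv ℝ (Function.uncurry w) (x, t) (1, 0) := by
  have h1 : HasFDerivAt (Function.uncurry w) (fderiv ℝ (Function.uncurry w) (x, t)) (x, t) :=
    (hw.differentiable (by simp) (x, t)).hasFDerivAt
  have h2 : HasFDerivAt (fun y : ℝ => (y, t))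
      ((ContinuousLinearMap.id ℝ ℝ).prod 0) x :=
    (hasFDerivAt_id x).prodMk (hasFDerivAt_const t x)
  have h3 := (h1.comp x h2).hasDerivAt
  simpa [pdx, pdt, Function.comp_def] using h3.deriv

lemma vmkdv_pdt_eq_fderiv {w : ℝ → ℝ → E} (hw : ContDiff ℝ ∞ (Function.uncurry w))
    (x t : ℝ) : pdt w x t = fderiv ℝ (Function.uncurry w) (x, t) (0, 1) := by
  have h1 : HasFDerivAt (Function.uncurry w) (fderiv ℝ (Function.uncurry w) (x, t)) (x, t) :=
    (hw.differentiable (by simp) (x, t)).hasFDerivAt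
  have h2 : HasFDerivAt (fun s : ℝ => (x, s))
      ((0 : ℝ →L[ℝ] ℝ).prod (ContinuousLinearMap.id ℝ ℝ)) t :=
    (hasFDerivAt_const x t).prodMk (hasFDerivAt_id t)
  have h3 := (h1.comp t h2).hasDerivAt
  simpa [pdx, pdt, Function.comp_def] using h3.deriv

lemma vmkdv_contDiff_fderiv_apply {v : ℝ × ℝ → E} (hv : ContDiff ℝ ∞ v) (e : ℝ × ℝ) :
    ContDiff ℝ ∞ (fun p => fderiv ℝ v p e) :=
  (hv.fderiv_right vmkdv_aux_add_one).clm_apply contDiff_const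

lemma vmkdv_contDiff_uncurry_pdx {w : ℝ → ℝ → E} (hw : ContDiff ℝ ∞ (Function.uncurry w)) :
    ContDiff ℝ ∞ (Function.uncurry (pdx w)) := by
  have : Function.uncurry (pdx w)
      = fun p : ℝ × ℝ => fderiv ℝ (Function.uncurry w) p (1, 0) := by
    funext p; exact vmkdv_pdx_eq_fderiv hw p.1 p.2
  rw [this]; exact vmkdv_contDiff_fderiv_apply hw _

lemma vmkdv_contDiff_uncurry_pdt {w : ℝ → ℝ → E} (hw : ContDiff ℝ ∞ (Function.uncurry w)) :
    ContDiff ℝ ∞ (Function.uncurry (pdt w)) := by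
  have : Function.uncurry (pdt w)
      = fun p : ℝ × ℝ => fderiv ℝ (Function.uncurry w) p (0, 1) := by
    funext p; exact vmkdv_pdt_eq_fderiv hw p.1 p.2
  rw [this]; exact vmkdv_contDiff_fderiv_apply hw _

lemma vmkdv_fderiv_apply_comm {v : ℝ × ℝ → E} (hv : ContDiff ℝ ∞ v) (p e₁ e₂ : ℝ × ℝ) :
    fderiv ℝ (fun q => fderiv ℝ v q e₂) p e₁ = fderiv ℝ (fun q => fderiv ℝ v q e₁) p e₂ := by
  have hd : ContDiff ℝ ∞ (fderiv ℝ v) := hv.fderiv_right vmkdv_aux_add_one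
  have hD : HasFDerivAt (fderiv ℝ v) (fderiv ℝ (fderiv ℝ v) p) p :=
    ((hd.differentiable (by simp)) p).hasFDerivAt
  have h1 : ∀ e : ℝ × ℝ, fderiv ℝ (fun q => fderiv ℝ v q e) p
      = (fderiv ℝ (fderiv ℝ v) p).flip e := by
    intro e
    have h2 := (hD.clm_apply (hasFDerivAt_const e p)).fderiv
    rw [h2]
    simp
  rw [h1, h1]
  exact second_derivative_symmetric
    (fun y => ((hv.differentiable (by simp)) y).hasFDerivAt) hD e₁ e₂

lemma vmkdv_pdt_pdx_comm {w : ℝ → ℝ → E} (hw : ContDiff ℝ ∞ (Function.uncurry w))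
    (x t : ℝ) : pdt (pdx w) x t = pdx (pdt w) x t := by
  have e1 : Function.uncurry (pdx w)
      = fun p : ℝ × ℝ => fderiv ℝ (Function.uncurry w) p (1, 0) := by
    funext p; exact vmkdv_pdx_eq_fderiv hw p.1 p.2
  have e2 : Function.uncurry (pdt w)
      = fun p : ℝ × ℝ => fderiv ℝ (Function.uncurry w) p (0, 1) := by
    funext p; exact vmkdv_pdt_eq_fderiv hw p.1 p.2
  rw [vmkdv_pdt_eq_fderiv (vmkdv_contDiff_uncurry_pdx hw),
    vmkdv_pdx_eq_fderiv (vmkdv_contDiff_uncurry_pdt hw), e1, e2]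
  exact vmkdv_fderiv_apply_comm hw (x, t) (0, 1) (1, 0)

lemma vmkdv_pdx_per {w : ℝ → ℝ → E} (h : ∀ x t, w (x + 1) t = w x t) (x t : ℝ) :
    pdx w (x + 1) t = pdx w x t := by
  show deriv (fun y => w y t) (x + 1) = deriv (fun y => w y t) x
  rw [← deriv_comp_add_const (fun y => w y t) 1 x]
  congr 1
  funext y
  exact h y t

end Aux

section G

variable {F : Type*} [NormedAddCommGroup F] [InnerProductSpace ℝ F]

/-- The flux function for the vmKdV energy. -/
noncomputable def vmkdvG (u : ℝ → ℝ → F) : ℝ → ℝ → ℝ := fun x t =>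
  (1 / 8) * ⟪u x t, u x t⟫ ^ 3
    + (1 / 2) * ⟪u x t, u x t⟫ * ⟪u x t, pdx (pdx u) x t⟫
    - ⟪u x t, u x t⟫ * ⟪pdx u x t, pdx u x t⟫
    - (1 / 2) * ⟪u x t, pdx u x t⟫ ^ 2
    - ⟪pdx u x t, pdx (pdx (pdx u)) x t⟫
    + (1 / 2) * ⟪pdx (pdx u) x t, pdx (pdx u) x t⟫

/-- The time derivative of the energy density. -/
noncomputable def vmkdvPhi (u : ℝ → ℝ → F) : ℝ → ℝ → ℝ := fun x t =>
  ⟪pdx u x t, pdt (pdx u) x t⟫ - (1 / 2) * ‖u x t‖ ^ 2 * ⟪u x t, pdt u x t⟫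

end G

set_option maxHeartbeats 2000000 in
theorem vmkdv_energy_constant (d : ℕ) (hd : 1 ≤ d)
    (u : ℝ → ℝ → EuclideanSpace ℝ (Fin d))
    (hu : ContDiff ℝ ∞ (Function.uncurry u))
    (hsol : IsVmKdV u)
    (hper : ∀ x t : ℝ, u (x + 1) t = u x t) :
    (∀ s t : ℝ,
        (∫ x in (0:ℝ)..1, (1 : ℝ) / 2 * ‖pdx u x s‖ ^ 2 - (1 : ℝ) / 8 * ‖u x s‖ ^ 4)
          = ∫ x in (0:ℝ)..1, (1 : ℝ) / 2 * ‖pdx u x t‖ ^ 2 - (1 : ℝ) / 8 * ‖u x t‖ ^ 4)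
      ∧ ∀ t : ℝ,
        deriv (fun s =>
          ∫ x in (0:ℝ)..1, (1 : ℝ) / 2 * ‖pdx u x s‖ ^ 2 - (1 : ℝ) / 8 * ‖u x s‖ ^ 4) t = 0 := by
  have h0 : ContDiff ℝ ∞ (Function.uncurry u) := hu
  have h1 := vmkdv_contDiff_uncurry_pdx h0
  have h2 := vmkdv_contDiff_uncurry_pdx h1
  have h3 := vmkdv_contDiff_uncurry_pdx h2
  have ht0 := vmkdv_contDiff_uncurry_pdt h0
  have ht1 := vmkdv_contDiff_uncurry_pdt h1
  -- the PDE, solved for `u_t`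
  have hpde : ∀ x t : ℝ, pdt u x t
      = -((((3 : ℝ) / 2) * ⟪u x t, u x t⟫) • pdx u x t) - pdx (pdx (pdx u)) x t := by
    intro x t
    have h := hsol x t
    rw [real_inner_self_eq_norm_sq]
    rw [add_assoc, add_eq_zero_iff_eq_neg] at h
    rw [h, neg_add]
    abel
  -- mixed partials commute
  have hmix : ∀ x t : ℝ, pdt (pdx u) x t = pdx (pdt u) x t := vmkdv_pdt_pdx_comm h0
  have hUt_slice : ∀ t : ℝ, (fun y => pdt u y t)
      = fun y => -((((3 : ℝ) / 2) * ⟪u y t, u y t⟫) • pdx u y t)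
          - pdx (pdx (pdx u)) y t := by
    intro t; funext y; exact hpde y t
  -- Key spatial computation: the flux identity  ∂ₓ G = φ
  have keyC : ∀ x t : ℝ, HasDerivAt (fun y => vmkdvG u y t) (vmkdvPhi u x t) x := by
    intro x t
    have hU := vmkdv_hasDerivAt_slice_x h0 x t
    have hU1 := vmkdv_hasDerivAt_slice_x h1 x t
    have hU2 := vmkdv_hasDerivAt_slice_x h2 x t
    have hU3 := vmkdv_hasDerivAt_slice_x h3 x t
    have h00 := HasDerivAt.inner ℝ hU hU
    have h02 := HasDerivAt.inner ℝ hU hU2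
    have h11 := HasDerivAt.inner ℝ hU1 hU1
    have h01 := HasDerivAt.inner ℝ hU hU1
    have h13 := HasDerivAt.inner ℝ hU1 hU3
    have h22 := HasDerivAt.inner ℝ hU2 hU2
    have hG := ((((((h00.pow 3).const_mul ((1:ℝ)/8)).add
        (((h00.const_mul ((1:ℝ)/2)).mul h02))).sub (h00.mul h11)).sub
        ((h01.pow 2).const_mul ((1:ℝ)/2))).sub h13).add (h22.const_mul ((1:ℝ)/2))
    have hfun : (fun y => vmkdvG u y t)
        = fun y => ((1:ℝ)/8) * ⟪u y t, u y t⟫ ^ 3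
            + ((1:ℝ)/2) * ⟪u y t, u y t⟫ * ⟪u y t, pdx (pdx u) y t⟫
            - ⟪u y t, u y t⟫ * ⟪pdx u y t, pdx u y t⟫
            - ((1:ℝ)/2) * ⟪u y t, pdx u y t⟫ ^ 2
            - ⟪pdx u y t, pdx (pdx (pdx u)) y t⟫
            + ((1:ℝ)/2) * ⟪pdx (pdx u) y t, pdx (pdx u) y t⟫ := rfl
    rw [hfun]
    convert hG using 1
    case e'_4 => rfl
    case e'_5 => rfl
    case e'_8 => rfl
    -- now a scalar identity
    have hDt1 : pdt (pdx u) x t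
        = -((((3:ℝ)/2) * ⟪u x t, u x t⟫) • pdx (pdx u) x t
            + (((3:ℝ)/2) * (⟪u x t, pdx u x t⟫ + ⟪pdx u x t, u x t⟫)) • pdx u x t)
          - pdx (pdx (pdx (pdx u))) x t := by
      rw [hmix x t]
      show deriv (fun y => pdt u y t) x = _
      rw [hUt_slice t]
      exact (((h00.const_mul ((3:ℝ)/2)).smul hU1).neg.sub hU3).deriv
    show vmkdvPhi u x t = _
    simp only [vmkdvPhi]
    rw [hDt1, hpde x t, ← real_inner_self_eq_norm_sq]
    simp only [inner_sub_right, inner_add_right, inner_neg_right, real_inner_smul_right]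
    rw [real_inner_comm (pdx u x t) (u x t),
      real_inner_comm (pdx (pdx u) x t) (pdx u x t),
      real_inner_comm (pdx (pdx (pdx u)) x t) (pdx (pdx u) x t)]
    ring
  -- time derivative of the energy density
  have keyD : ∀ x s : ℝ, HasDerivAt
      (fun r => (1:ℝ)/2 * ‖pdx u x r‖ ^ 2 - (1:ℝ)/8 * ‖u x r‖ ^ 4) (vmkdvPhi u x s) s := by
    intro x s
    have hU := vmkdv_hasDerivAt_slice_t h0 x s
    have hU1 := vmkdv_hasDerivAt_slice_t h1 x s
    have i1 := HasDerivAt.inner ℝ hU1 hU1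
    have i0 := HasDerivAt.inner ℝ hU hU
    have hcomb := (i1.const_mul ((1:ℝ)/2)).sub ((i0.pow 2).const_mul ((1:ℝ)/8))
    have hfun : (fun r => (1:ℝ)/2 * ‖pdx u x r‖ ^ 2 - (1:ℝ)/8 * ‖u x r‖ ^ 4)
        = fun r => (1:ℝ)/2 * ⟪pdx u x r, pdx u x r⟫ - (1:ℝ)/8 * ⟪u x r, u x r⟫ ^ 2 := by
      funext r
      rw [real_inner_self_eq_norm_sq, real_inner_self_eq_norm_sq]
      ring
    rw [hfun]
    convert hcomb using 1
    case e'_4 => rfl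
    case e'_5 => rfl
    case e'_8 => rfl
    simp only [vmkdvPhi]
    rw [← real_inner_self_eq_norm_sq,
      real_inner_comm (pdt (pdx u) x s) (pdx u x s),
      real_inner_comm (pdt u x s) (u x s)]
    ring
  -- continuity facts
  have cPhi : Continuous (fun p : ℝ × ℝ => vmkdvPhi u p.1 p.2) := by
    simp only [vmkdvPhi]
    exact (Continuous.inner h1.continuous ht1.continuous).sub
      ((continuous_const.mul ((h0.continuous.norm).pow 2)).mul
        (Continuous.inner h0.continuous ht0.continuous))
  have cf : Continuous (fun p : ℝ × ℝ =>
      (1:ℝ)/2 * ‖pdx u p.1 p.2‖ ^ 2 - (1:ℝ)/8 * ‖u p.1 p.2‖ ^ 4) :=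
    (continuous_const.mul ((h1.continuous.norm).pow 2)).sub
      (continuous_const.mul ((h0.continuous.norm).pow 4))
  -- spatial periodicity of derivatives
  have p1 : ∀ x t, pdx u (x + 1) t = pdx u x t := fun x t => vmkdv_pdx_per hper x t
  have p2 : ∀ x t, pdx (pdx u) (x + 1) t = pdx (pdx u) x t :=
    fun x t => vmkdv_pdx_per p1 x t
  have p3 : ∀ x t, pdx (pdx (pdx u)) (x + 1) t = pdx (pdx (pdx u)) x t :=
    fun x t => vmkdv_pdx_per p2 x t
  -- the integral of φ over a period vanishes
  have intPhi : ∀ t : ℝ, (∫ x in (0:ℝ)..1, vmkdvPhi u x t) = 0 := by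
    intro t
    have hcont : Continuous (fun x => vmkdvPhi u x t) :=
      cPhi.comp (continuous_id.prodMk continuous_const)
    rw [intervalIntegral.integral_eq_sub_of_hasDerivAt (fun x _ => keyC x t)
      (hcont.intervalIntegrable 0 1)]
    have e0 : u 1 t = u 0 t := by simpa using hper 0 t
    have e1 : pdx u 1 t = pdx u 0 t := by simpa using p1 0 t
    have e2 : pdx (pdx u) 1 t = pdx (pdx u) 0 t := by simpa using p2 0 t
    have e3 : pdx (pdx (pdx u)) 1 t = pdx (pdx (pdx u)) 0 t := by simpa using p3 0 t
    simp [vmkdvG, e0, e1, e2, e3]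
  -- differentiation under the integral sign
  have hF : ∀ t₀ : ℝ, HasDerivAt
      (fun s => ∫ x in (0:ℝ)..1, (1:ℝ)/2 * ‖pdx u x s‖ ^ 2 - (1:ℝ)/8 * ‖u x s‖ ^ 4) 0 t₀ := by
    intro t₀
    obtain ⟨C, hC⟩ := ((isCompact_Icc : IsCompact (Set.Icc (0:ℝ) 1)).prod
      (isCompact_closedBall t₀ 1)).exists_bound_of_continuousOn cPhi.continuousOn
    have main := (intervalIntegral.hasDerivAt_integral_of_dominated_loc_of_deriv_le
      (μ := volume) (a := 0) (b := 1)
      (F := fun s x => (1:ℝ)/2 * ‖pdx u x s‖ ^ 2 - (1:ℝ)/8 * ‖u x s‖ ^ 4)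
      (F' := fun s x => vmkdvPhi u x s) (x₀ := t₀) (bound := fun _ => C)
      (Metric.ball_mem_nhds t₀ zero_lt_one)
      (Filter.Eventually.of_forall fun s =>
        (cf.comp (continuous_id.prodMk continuous_const)).aestronglyMeasurable)
      ((cf.comp (continuous_id.prodMk continuous_const)).intervalIntegrable 0 1)
      (cPhi.comp (continuous_id.prodMk continuous_const)).aestronglyMeasurable
      (Filter.Eventually.of_forall fun x hx s hs => by
        have hxmem : x ∈ Set.Icc (0:ℝ) 1 := by
          have hx' : x ∈ Set.Ioc (0:ℝ) 1 := by
            simpa [Set.uIoc_of_le (zero_le_one (α := ℝ))] using hx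
          exact Set.Ioc_subset_Icc_self hx'
        have := hC (x, s) ⟨hxmem, Metric.ball_subset_closedBall hs⟩
        simpa using this)
      intervalIntegrable_const
      (Filter.Eventually.of_forall fun x hx s hs => keyD x s)).2
    rw [intPhi t₀] at main
    exact main
  refine ⟨fun s t => ?_, fun t => (hF t).deriv⟩
  exact is_const_of_deriv_eq_zero (fun r => (hF r).differentiableAt)
    (fun r => (hF r).deriv) s t
end

section
/- Let d ≥ 1 and let u : ℝ × ℝ → ℝ^d be a smooth (C^∞) solution of the vmKdV equation u_t + (3/2)‖u‖² u_x + u_xxx = 0 that is 1-periodic in x. Set C₂ = F₂(u)(0) and C₄ = F₄(u)(0), and suppose C_GN > 0 is a constant such that for every t the Gagliardo–Nirenberg inequality (∫₀¹‖u(x,t)‖⁴ dx)^{1/4} ≤ C_GN (∫₀¹‖u(x,t)‖² dx)^{3/8} (∫₀¹‖u_x(x,t)‖² dx)^{1/8} holds. Then for every t, (∫₀¹ ‖u_x(x,t)‖² dx)^{1/2} ≤ (4·C₄ + C_GN⁸ · C₂³ / 2)^{1/2}. -/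
open Real MeasureTheory intervalIntegral InnerProductSpace ContDiff

lemma one_le_inf : (1 : WithTop ℕ∞) ≤ ∞ := by
  have : ((1:ℕ∞) : WithTop ℕ∞) ≤ ((⊤:ℕ∞) : WithTop ℕ∞) := by exact_mod_cast (le_top : (1:ℕ∞) ≤ ⊤)
  simpa using this

lemma two_le_inf : (2 : WithTop ℕ∞) ≤ ∞ := by
  have : ((2:ℕ∞) : WithTop ℕ∞) ≤ ((⊤:ℕ∞) : WithTop ℕ∞) := by exact_mod_cast (le_top : (2:ℕ∞) ≤ ⊤)
  simpa using this

lemma inf_add_one_le : ∞ + 1 ≤ (∞ : WithTop ℕ∞) := by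
  have : ((⊤+1:ℕ∞) : WithTop ℕ∞) ≤ ((⊤:ℕ∞) : WithTop ℕ∞) := by
    exact_mod_cast (le_top : (⊤+1:ℕ∞) ≤ ⊤)
  simpa using this


section Helpers
variable {E : Type*} [NormedAddCommGroup E] [NormedSpace ℝ E] {u : ℝ → ℝ → E}

lemma hasDerivAt_slice_x {F : ℝ × ℝ → E} {x t : ℝ} (hF : DifferentiableAt ℝ F (x, t)) :
    HasDerivAt (fun y => F (y, t)) (fderiv ℝ F (x, t) (1, 0)) x := by
  have h1 : HasDerivAt (fun y : ℝ => ((y, t) : ℝ × ℝ)) ((1 : ℝ), (0 : ℝ)) x :=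
    (hasDerivAt_id x).prodMk (hasDerivAt_const x t)
  exact hF.hasFDerivAt.comp_hasDerivAt x h1

lemma hasDerivAt_slice_t {F : ℝ × ℝ → E} {x t : ℝ} (hF : DifferentiableAt ℝ F (x, t)) :
    HasDerivAt (fun s => F (x, s)) (fderiv ℝ F (x, t) (0, 1)) t := by
  have h1 : HasDerivAt (fun s : ℝ => ((x, s) : ℝ × ℝ)) ((0 : ℝ), (1 : ℝ)) t :=
    (hasDerivAt_const t x).prodMk (hasDerivAt_id t)
  exact hF.hasFDerivAt.comp_hasDerivAt t h1

lemma pdx_eq (hu : ContDiff ℝ ∞ (Function.uncurry u)) (x t : ℝ) :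
    pdx u x t = fderiv ℝ (Function.uncurry u) (x, t) (1, 0) :=
  (hasDerivAt_slice_x (hu.differentiable (by simp) (x, t))).deriv

lemma pdt_eq (hu : ContDiff ℝ ∞ (Function.uncurry u)) (x t : ℝ) :
    pdt u x t = fderiv ℝ (Function.uncurry u) (x, t) (0, 1) :=
  (hasDerivAt_slice_t (hu.differentiable (by simp) (x, t))).deriv

lemma hasDerivAt_pdx (hu : ContDiff ℝ ∞ (Function.uncurry u)) (x t : ℝ) :
    HasDerivAt (fun y => u y t) (pdx u x t) x := by
  rw [pdx_eq hu]
  exact hasDerivAt_slice_x (hu.differentiable (by simp) (x, t))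

lemma hasDerivAt_pdt (hu : ContDiff ℝ ∞ (Function.uncurry u)) (x t : ℝ) :
    HasDerivAt (fun s => u x s) (pdt u x t) t := by
  rw [pdt_eq hu]
  exact hasDerivAt_slice_t (hu.differentiable (by simp) (x, t))

lemma contDiff_pdx_s4 (hu : ContDiff ℝ ∞ (Function.uncurry u)) :
    ContDiff ℝ ∞ (Function.uncurry (pdx u)) := by
  have h : Function.uncurry (pdx u) =
      fun p : ℝ × ℝ => fderiv ℝ (Function.uncurry u) p ((1 : ℝ), (0 : ℝ)) := by
    funext p
    exact pdx_eq hu p.1 p.2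
  rw [h]
  exact (ContinuousLinearMap.apply ℝ E ((1 : ℝ), (0 : ℝ))).contDiff.comp
    (hu.fderiv_right inf_add_one_le)

lemma contDiff_pdt_s4 (hu : ContDiff ℝ ∞ (Function.uncurry u)) :
    ContDiff ℝ ∞ (Function.uncurry (pdt u)) := by
  have h : Function.uncurry (pdt u) =
      fun p : ℝ × ℝ => fderiv ℝ (Function.uncurry u) p ((0 : ℝ), (1 : ℝ)) := by
    funext p
    exact pdt_eq hu p.1 p.2
  rw [h]
  exact (ContinuousLinearMap.apply ℝ E ((0 : ℝ), (1 : ℝ))).contDiff.comp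
    (hu.fderiv_right inf_add_one_le)

lemma pdx_per (hper : ∀ x t : ℝ, u (x + 1) t = u x t) (x t : ℝ) :
    pdx u (x + 1) t = pdx u x t := by
  show deriv (fun y => u y t) (x + 1) = deriv (fun y => u y t) x
  rw [← deriv_comp_add_const (fun y => u y t) 1 x]
  congr 1; funext y; rw [hper]

lemma pdx_pdt_comm (hu : ContDiff ℝ ∞ (Function.uncurry u)) (x t : ℝ) :
    pdx (pdt u) x t = pdt (pdx u) x t := by
  set U := Function.uncurry u with hU
  have hD : DifferentiableAt ℝ (fderiv ℝ U) (x, t) :=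
    ((hu.fderiv_right inf_add_one_le).differentiable (by simp)) (x, t)
  have h1 : HasDerivAt (fun y => pdt u y t)
      ((fderiv ℝ (fderiv ℝ U) (x, t) (1, 0)) (0, 1)) x := by
    have := (hasDerivAt_slice_x hD).clm_apply (hasDerivAt_const x ((0 : ℝ), (1 : ℝ)))
    simp only [map_zero, add_zero] at this
    have heq : (fun y => (fderiv ℝ U (y, t)) ((0:ℝ), (1:ℝ))) = fun y => pdt u y t := by
      funext y; exact (pdt_eq hu y t).symm
    rwa [heq] at this
  have h2 : HasDerivAt (fun s => pdx u x s)
      ((fderiv ℝ (fderiv ℝ U) (x, t) (0, 1)) (1, 0)) t := by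
    have := (hasDerivAt_slice_t hD).clm_apply (hasDerivAt_const t ((1 : ℝ), (0 : ℝ)))
    simp only [map_zero, add_zero] at this
    have heq : (fun s => (fderiv ℝ U (x, s)) ((1:ℝ), (0:ℝ))) = fun s => pdx u x s := by
      funext s; exact (pdx_eq hu x s).symm
    rwa [heq] at this
  have hsymm : IsSymmSndFDerivAt ℝ U (x, t) :=
    (hu.contDiffAt).isSymmSndFDerivAt (by simpa using two_le_inf)
  calc pdx (pdt u) x t = (fderiv ℝ (fderiv ℝ U) (x, t) (1, 0)) (0, 1) := h1.deriv
    _ = (fderiv ℝ (fderiv ℝ U) (x, t) (0, 1)) (1, 0) := hsymm _ _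
    _ = pdt (pdx u) x t := h2.deriv.symm

end Helpers

section Integral
variable {u : ℝ → ℝ → ℝ}

lemma cont_slice_x {E : Type*} [NormedAddCommGroup E] [NormedSpace ℝ E] {v : ℝ → ℝ → E}
    (hv : ContDiff ℝ ∞ (Function.uncurry v)) (t : ℝ) : Continuous (fun x => v x t) := by
  have : (fun x => v x t) = Function.uncurry v ∘ (fun x => (x, t)) := rfl
  rw [this]
  exact hv.continuous.comp (continuous_id.prodMk continuous_const)

lemma hasDerivAt_param_integral (hu : ContDiff ℝ ∞ (Function.uncurry u)) (t₀ : ℝ) :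
    HasDerivAt (fun t => ∫ x in (0:ℝ)..1, u x t)
      (∫ x in (0:ℝ)..1, pdt u x t₀) t₀ := by
  have hcont : Continuous (Function.uncurry (pdt u)) := (contDiff_pdt_s4 hu).continuous
  obtain ⟨M, hM⟩ : ∃ M, ∀ p ∈ (Set.uIcc (0:ℝ) 1) ×ˢ (Metric.closedBall t₀ 1),
      ‖Function.uncurry (pdt u) p‖ ≤ M :=
    (isCompact_uIcc.prod (isCompact_closedBall t₀ 1)).exists_bound_of_continuousOn
      hcont.continuousOn
  have key := intervalIntegral.hasDerivAt_integral_of_dominated_loc_of_deriv_le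
    (F := fun t x => u x t) (F' := fun t x => pdt u x t) (x₀ := t₀)
    (a := (0:ℝ)) (b := 1) (bound := fun _ => M) (μ := MeasureTheory.volume)
    (s := Metric.ball t₀ 1) (Metric.ball_mem_nhds t₀ one_pos)
    (Filter.Eventually.of_forall fun t =>
      ((cont_slice_x hu t).aestronglyMeasurable))
    ((cont_slice_x hu t₀).intervalIntegrable 0 1)
    ((cont_slice_x (contDiff_pdt_s4 hu) t₀).aestronglyMeasurable)
    (MeasureTheory.ae_of_all _ fun x hx t ht => by
      exact hM (x, t) ⟨Set.uIoc_subset_uIcc hx, Metric.ball_subset_closedBall ht⟩)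
    (intervalIntegrable_const)
    (MeasureTheory.ae_of_all _ fun x hx t ht => hasDerivAt_pdt hu x t)
  exact key.2

lemma const_of_hasDerivAt_zero {Φ : ℝ → ℝ} (h : ∀ t, HasDerivAt Φ 0 t) (s t : ℝ) :
    Φ s = Φ t := by
  have hd : Differentiable ℝ Φ := fun x => (h x).differentiableAt
  have : ∀ x, deriv Φ x = 0 := fun x => (h x).deriv
  exact is_const_of_deriv_eq_zero hd this s t

lemma integral_pdx_eq_zero {E : Type*} [NormedAddCommGroup E] [NormedSpace ℝ E]
    {g : ℝ → ℝ} {g' : ℝ → ℝ}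
    (hg : ∀ x, HasDerivAt g (g' x) x) (hcont : Continuous g')
    (hper : g 1 = g 0) :
    ∫ x in (0:ℝ)..1, g' x = 0 := by
  rw [intervalIntegral.integral_eq_sub_of_hasDerivAt (fun x _ => hg x)
    (hcont.intervalIntegrable 0 1), hper, sub_self]

end Integral

section Conservation
open RealInnerProductSpace
variable {E : Type*} [NormedAddCommGroup E] [InnerProductSpace ℝ E] {u : ℝ → ℝ → E}

/-- abbreviation for the PDE in solved form -/
def SolvedPDE (u : ℝ → ℝ → E) : Prop :=
  ∀ x t : ℝ, pdt u x t
    = -(((3:ℝ)/2 * ⟪u x t, u x t⟫) • pdx u x t + pdx (pdx (pdx u)) x t)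

lemma momentum_integrand_deriv (hu : ContDiff ℝ ∞ (Function.uncurry u))
    (hsol : SolvedPDE u) (t x : ℝ) :
    HasDerivAt (fun y => -((3:ℝ)/8) * ⟪u y t, u y t⟫^2 - ⟪u y t, pdx (pdx u) y t⟫
        + 1/2 * ⟪pdx u y t, pdx u y t⟫)
      (⟪u x t, pdt u x t⟫) x := by
  have hw : HasDerivAt (fun y => u y t) (pdx u x t) x := hasDerivAt_pdx hu x t
  have hp : HasDerivAt (fun y => pdx u y t) (pdx (pdx u) x t) x :=
    hasDerivAt_pdx (contDiff_pdx_s4 hu) x t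
  have hq : HasDerivAt (fun y => pdx (pdx u) y t) (pdx (pdx (pdx u)) x t) x :=
    hasDerivAt_pdx (contDiff_pdx_s4 (contDiff_pdx_s4 hu)) x t
  have h1 := ((hw.inner ℝ hw).pow 2).const_mul (-(3:ℝ)/8)
  have h2 := hw.inner ℝ hq
  have h3 := (hp.inner ℝ hp).const_mul ((1:ℝ)/2)
  have H := (h1.sub h2).add h3
  have : HasDerivAt (fun y => -((3:ℝ)/8) * ⟪u y t, u y t⟫^2 - ⟪u y t, pdx (pdx u) y t⟫
      + 1/2 * ⟪pdx u y t, pdx u y t⟫)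
      (-(3:ℝ)/8 * (2 * ⟪u x t, u x t⟫^1 * (⟪u x t, pdx u x t⟫ + ⟪pdx u x t, u x t⟫))
        - (⟪u x t, pdx (pdx (pdx u)) x t⟫ + ⟪pdx u x t, pdx (pdx u) x t⟫)
        + 1/2 * (⟪pdx u x t, pdx (pdx u) x t⟫ + ⟪pdx (pdx u) x t, pdx u x t⟫)) x := by
    refine HasDerivAt.congr_deriv
      (HasDerivAt.congr_of_eventuallyEq H (Filter.Eventually.of_forall fun y => ?_)) ?_
    · simp only [Pi.add_apply, Pi.sub_apply, Pi.pow_apply]; ring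
    · push_cast; ring
  convert this using 1
  rw [hsol x t]
  simp only [inner_neg_right, inner_add_right, real_inner_smul_right]
  simp only [real_inner_comm (pdx u x t) (u x t),
    real_inner_comm (pdx (pdx u) x t) (pdx u x t)]
  ring

lemma momentum_deriv_zero (hu : ContDiff ℝ ∞ (Function.uncurry u))
    (hsol : SolvedPDE u) (hper : ∀ x t : ℝ, u (x + 1) t = u x t) (t : ℝ) :
    ∫ x in (0:ℝ)..1, ⟪u x t, pdt u x t⟫ = 0 := by
  have hper1 : ∀ x t : ℝ, pdx u (x + 1) t = pdx u x t := pdx_per hper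
  have hper2 : ∀ x t : ℝ, pdx (pdx u) (x + 1) t = pdx (pdx u) x t := pdx_per hper1
  apply integral_pdx_eq_zero (E := E) (fun x => momentum_integrand_deriv hu hsol t x)
  · exact ((cont_slice_x hu t).inner (cont_slice_x (contDiff_pdt_s4 hu) t))
  · have key : ∀ x : ℝ, (fun y => -((3:ℝ)/8) * ⟪u y t, u y t⟫^2 - ⟪u y t, pdx (pdx u) y t⟫
        + 1/2 * ⟪pdx u y t, pdx u y t⟫) (x + 1)
        = (fun y => -((3:ℝ)/8) * ⟪u y t, u y t⟫^2 - ⟪u y t, pdx (pdx u) y t⟫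
        + 1/2 * ⟪pdx u y t, pdx u y t⟫) x := by
      intro x
      simp only [hper, hper1, hper2]
    have := key 0
    rwa [zero_add] at this

lemma pdx_pdt_expr (hu : ContDiff ℝ ∞ (Function.uncurry u)) (hsol : SolvedPDE u) (x t : ℝ) :
    pdx (pdt u) x t
      = -((((3:ℝ)/2 * (⟪u x t, pdx u x t⟫ + ⟪pdx u x t, u x t⟫)) • pdx u x t
          + ((3:ℝ)/2 * ⟪u x t, u x t⟫) • pdx (pdx u) x t)
          + pdx (pdx (pdx (pdx u))) x t) := by
  have hw : HasDerivAt (fun y => u y t) (pdx u x t) x := hasDerivAt_pdx hu x t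
  have hp : HasDerivAt (fun y => pdx u y t) (pdx (pdx u) x t) x :=
    hasDerivAt_pdx (contDiff_pdx_s4 hu) x t
  have hr : HasDerivAt (fun y => pdx (pdx (pdx u)) y t) (pdx (pdx (pdx (pdx u))) x t) x :=
    hasDerivAt_pdx (contDiff_pdx_s4 (contDiff_pdx_s4 (contDiff_pdx_s4 hu))) x t
  have hut : HasDerivAt (fun y => pdt u y t) (pdx (pdt u) x t) x :=
    hasDerivAt_pdx (contDiff_pdt_s4 hu) x t
  have hc := (hw.inner ℝ hw).const_mul ((3:ℝ)/2)
  have hF := ((hc.smul hp).add hr).neg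
  have heq : (fun y => pdt u y t)
      = fun y => -(((3:ℝ)/2 * ⟪u y t, u y t⟫) • pdx u y t + pdx (pdx (pdx u)) y t) := by
    funext y; exact hsol y t
  rw [heq] at hut
  have := hut.unique hF
  rw [this]
  congr 1
  abel

lemma energy_integrand_deriv (hu : ContDiff ℝ ∞ (Function.uncurry u))
    (hsol : SolvedPDE u) (t x : ℝ) :
    HasDerivAt (fun y =>
        -(⟪u y t, u y t⟫ * ⟪pdx u y t, pdx u y t⟫) - ⟪pdx u y t, pdx (pdx (pdx u)) y t⟫
        + 1/2 * ⟪pdx (pdx u) y t, pdx (pdx u) y t⟫ + 1/8 * ⟪u y t, u y t⟫^3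
        + 1/2 * (⟪u y t, u y t⟫ * ⟪u y t, pdx (pdx u) y t⟫) - 1/2 * ⟪u y t, pdx u y t⟫^2)
      (⟪pdx u x t, pdt (pdx u) x t⟫ - 1/2 * ⟪u x t, u x t⟫ * ⟪u x t, pdt u x t⟫) x := by
  have hw : HasDerivAt (fun y => u y t) (pdx u x t) x := hasDerivAt_pdx hu x t
  have hp : HasDerivAt (fun y => pdx u y t) (pdx (pdx u) x t) x :=
    hasDerivAt_pdx (contDiff_pdx_s4 hu) x t
  have hq : HasDerivAt (fun y => pdx (pdx u) y t) (pdx (pdx (pdx u)) x t) x :=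
    hasDerivAt_pdx (contDiff_pdx_s4 (contDiff_pdx_s4 hu)) x t
  have hr : HasDerivAt (fun y => pdx (pdx (pdx u)) y t) (pdx (pdx (pdx (pdx u))) x t) x :=
    hasDerivAt_pdx (contDiff_pdx_s4 (contDiff_pdx_s4 (contDiff_pdx_s4 hu))) x t
  have a1 := hw.inner ℝ hw
  have term1 := (a1.mul (hp.inner ℝ hp)).neg
  have term2 := hp.inner ℝ hr
  have term3 := (hq.inner ℝ hq).const_mul ((1:ℝ)/2)
  have term4 := (a1.pow 3).const_mul ((1:ℝ)/8)
  have term5 := (a1.mul (hw.inner ℝ hq)).const_mul ((1:ℝ)/2)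
  have term6 := ((hw.inner ℝ hp).pow 2).const_mul ((1:ℝ)/2)
  have H := ((((term1.sub term2).add term3).add term4).add term5).sub term6
  refine HasDerivAt.congr_deriv H ?_
  rw [← pdx_pdt_comm hu x t, pdx_pdt_expr hu hsol x t, hsol x t]
  simp only [inner_neg_right, inner_add_right, real_inner_smul_right]
  simp only [real_inner_comm (pdx u x t) (u x t),
    real_inner_comm (pdx (pdx u) x t) (pdx u x t),
    real_inner_comm (pdx (pdx (pdx u)) x t) (pdx (pdx u) x t)]
  push_cast
  ring

lemma energy_deriv_zero (hu : ContDiff ℝ ∞ (Function.uncurry u))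
    (hsol : SolvedPDE u) (hper : ∀ x t : ℝ, u (x + 1) t = u x t) (t : ℝ) :
    ∫ x in (0:ℝ)..1,
      (⟪pdx u x t, pdt (pdx u) x t⟫ - 1/2 * ⟪u x t, u x t⟫ * ⟪u x t, pdt u x t⟫) = 0 := by
  have hper1 : ∀ x t : ℝ, pdx u (x + 1) t = pdx u x t := pdx_per hper
  have hper2 : ∀ x t : ℝ, pdx (pdx u) (x + 1) t = pdx (pdx u) x t := pdx_per hper1
  have hper3 : ∀ x t : ℝ, pdx (pdx (pdx u)) (x + 1) t = pdx (pdx (pdx u)) x t := pdx_per hper2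
  apply integral_pdx_eq_zero (E := E) (fun x => energy_integrand_deriv hu hsol t x)
  · apply Continuous.sub
    · exact (cont_slice_x (contDiff_pdx_s4 hu) t).inner (cont_slice_x (contDiff_pdt_s4 (contDiff_pdx_s4 hu)) t)
    · exact ((continuous_const.mul (((cont_slice_x hu t).inner (cont_slice_x hu t)))).mul
        ((cont_slice_x hu t).inner (cont_slice_x (contDiff_pdt_s4 hu) t)))
  · have key : ∀ x : ℝ, (fun y =>
        -(⟪u y t, u y t⟫ * ⟪pdx u y t, pdx u y t⟫) - ⟪pdx u y t, pdx (pdx (pdx u)) y t⟫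
        + 1/2 * ⟪pdx (pdx u) y t, pdx (pdx u) y t⟫ + 1/8 * ⟪u y t, u y t⟫^3
        + 1/2 * (⟪u y t, u y t⟫ * ⟪u y t, pdx (pdx u) y t⟫) - 1/2 * ⟪u y t, pdx u y t⟫^2) (x + 1)
        = (fun y =>
        -(⟪u y t, u y t⟫ * ⟪pdx u y t, pdx u y t⟫) - ⟪pdx u y t, pdx (pdx (pdx u)) y t⟫
        + 1/2 * ⟪pdx (pdx u) y t, pdx (pdx u) y t⟫ + 1/8 * ⟪u y t, u y t⟫^3
        + 1/2 * (⟪u y t, u y t⟫ * ⟪u y t, pdx (pdx u) y t⟫) - 1/2 * ⟪u y t, pdx u y t⟫^2) x := by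
      intro x
      simp only [hper, hper1, hper2, hper3]
    have := key 0
    rwa [zero_add] at this

lemma pdt_f2 (hu : ContDiff ℝ ∞ (Function.uncurry u)) (x t : ℝ) :
    pdt (fun x t => (1:ℝ)/2 * ‖u x t‖^2) x t = ⟪u x t, pdt u x t⟫ := by
  have hwt := hasDerivAt_pdt hu x t
  have h := (hwt.inner ℝ hwt).const_mul ((1:ℝ)/2)
  have heq : (fun s => (1:ℝ)/2 * ⟪u x s, u x s⟫) = fun s => (1:ℝ)/2 * ‖u x s‖^2 := by
    funext s; rw [real_inner_self_eq_norm_sq]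
  rw [heq] at h
  show deriv (fun s => (1:ℝ)/2 * ‖u x s‖^2) t = _
  rw [h.deriv, real_inner_comm (pdt u x t) (u x t)]
  ring

lemma pdt_f4 (hu : ContDiff ℝ ∞ (Function.uncurry u)) (x t : ℝ) :
    pdt (fun x t => (1:ℝ)/2 * ‖pdx u x t‖^2 - (1:ℝ)/8 * ‖u x t‖^4) x t
      = ⟪pdx u x t, pdt (pdx u) x t⟫ - 1/2 * ⟪u x t, u x t⟫ * ⟪u x t, pdt u x t⟫ := by
  have hwt := hasDerivAt_pdt hu x t
  have hpt := hasDerivAt_pdt (contDiff_pdx_s4 hu) x t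
  have h := ((hpt.inner ℝ hpt).const_mul ((1:ℝ)/2)).sub
    (((hwt.inner ℝ hwt).pow 2).const_mul ((1:ℝ)/8))
  have heq : (fun s => (1:ℝ)/2 * ⟪pdx u x s, pdx u x s⟫ - (1:ℝ)/8 * ⟪u x s, u x s⟫^2)
      = fun s => (1:ℝ)/2 * ‖pdx u x s‖^2 - (1:ℝ)/8 * ‖u x s‖^4 := by
    funext s; rw [real_inner_self_eq_norm_sq, real_inner_self_eq_norm_sq]; ring
  replace h : HasDerivAt (fun s => (1:ℝ)/2 * ⟪pdx u x s, pdx u x s⟫ - (1:ℝ)/8 * ⟪u x s, u x s⟫^2) _ t := h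
  rw [heq] at h
  show deriv (fun s => (1:ℝ)/2 * ‖pdx u x s‖^2 - (1:ℝ)/8 * ‖u x s‖^4) t = _
  rw [h.deriv, real_inner_comm (pdt u x t) (u x t),
    real_inner_comm (pdt (pdx u) x t) (pdx u x t)]
  push_cast
  ring

lemma F2_conserved (hu : ContDiff ℝ ∞ (Function.uncurry u)) (hsol : SolvedPDE u)
    (hper : ∀ x t : ℝ, u (x + 1) t = u x t) (t : ℝ) :
    (∫ x in (0:ℝ)..1, (1:ℝ)/2 * ‖u x t‖^2) = ∫ x in (0:ℝ)..1, (1:ℝ)/2 * ‖u x 0‖^2 := by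
  have hf2 : ContDiff ℝ ∞ (Function.uncurry (fun x t => (1:ℝ)/2 * ‖u x t‖^2)) :=
    contDiff_const.mul (hu.norm_sq ℝ)
  apply const_of_hasDerivAt_zero (fun t₀ => ?_) t 0
  have h := hasDerivAt_param_integral hf2 t₀
  have hz : (∫ x in (0:ℝ)..1, pdt (fun x t => (1:ℝ)/2 * ‖u x t‖^2) x t₀) = 0 := by
    have : (fun x => pdt (fun x t => (1:ℝ)/2 * ‖u x t‖^2) x t₀)
        = fun x => ⟪u x t₀, pdt u x t₀⟫ := funext fun x => pdt_f2 hu x t₀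
    rw [this]
    exact momentum_deriv_zero hu hsol hper t₀
  rwa [hz] at h

lemma F4_conserved (hu : ContDiff ℝ ∞ (Function.uncurry u)) (hsol : SolvedPDE u)
    (hper : ∀ x t : ℝ, u (x + 1) t = u x t) (t : ℝ) :
    (∫ x in (0:ℝ)..1, ((1:ℝ)/2 * ‖pdx u x t‖^2 - (1:ℝ)/8 * ‖u x t‖^4))
      = ∫ x in (0:ℝ)..1, ((1:ℝ)/2 * ‖pdx u x 0‖^2 - (1:ℝ)/8 * ‖u x 0‖^4) := by
  have hn4 : ContDiff ℝ ∞ (fun p : ℝ × ℝ => ‖Function.uncurry u p‖^4) := by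
    have : (fun p : ℝ × ℝ => ‖Function.uncurry u p‖^4)
        = fun p : ℝ × ℝ => (‖Function.uncurry u p‖^2)^2 := by
      funext p; ring
    rw [this]
    exact (hu.norm_sq ℝ).pow 2
  have hf4 : ContDiff ℝ ∞ (Function.uncurry
      (fun x t => (1:ℝ)/2 * ‖pdx u x t‖^2 - (1:ℝ)/8 * ‖u x t‖^4)) :=
    (contDiff_const.mul ((contDiff_pdx_s4 hu).norm_sq ℝ)).sub (contDiff_const.mul hn4)
  apply const_of_hasDerivAt_zero (fun t₀ => ?_) t 0
  have h := hasDerivAt_param_integral hf4 t₀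
  have hz : (∫ x in (0:ℝ)..1,
      pdt (fun x t => (1:ℝ)/2 * ‖pdx u x t‖^2 - (1:ℝ)/8 * ‖u x t‖^4) x t₀) = 0 := by
    have : (fun x => pdt (fun x t => (1:ℝ)/2 * ‖pdx u x t‖^2 - (1:ℝ)/8 * ‖u x t‖^4) x t₀)
        = fun x => ⟪pdx u x t₀, pdt (pdx u) x t₀⟫
            - 1/2 * ⟪u x t₀, u x t₀⟫ * ⟪u x t₀, pdt u x t₀⟫ := funext fun x => pdt_f4 hu x t₀
    rw [this]
    exact energy_deriv_zero hu hsol hper t₀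
  rwa [hz] at h

end Conservation

theorem vmkdv_stability_bound (d : ℕ) (hd : 1 ≤ d)
    (u : ℝ → ℝ → EuclideanSpace ℝ (Fin d))
    (hu : ContDiff ℝ ∞ (Function.uncurry u))
    (hsol : IsVmKdV u)
    (hper : ∀ x t : ℝ, u (x + 1) t = u x t)
    (C₂ C₄ : ℝ)
    (hC₂ : C₂ = ∫ x in (0:ℝ)..1, (1 : ℝ) / 2 * ‖u x 0‖ ^ 2)
    (hC₄ : C₄ = ∫ x in (0:ℝ)..1, (1 : ℝ) / 2 * ‖pdx u x 0‖ ^ 2 - (1 : ℝ) / 8 * ‖u x 0‖ ^ 4)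
    (CGN : ℝ) (hCGN : 0 < CGN)
    (hGN : ∀ t : ℝ,
      (∫ x in (0:ℝ)..1, ‖u x t‖ ^ 4) ^ ((1 : ℝ) / 4)
        ≤ CGN * (∫ x in (0:ℝ)..1, ‖u x t‖ ^ 2) ^ ((3 : ℝ) / 8)
            * (∫ x in (0:ℝ)..1, ‖pdx u x t‖ ^ 2) ^ ((1 : ℝ) / 8)) :
    ∀ t : ℝ,
      (∫ x in (0:ℝ)..1, ‖pdx u x t‖ ^ 2) ^ ((1 : ℝ) / 2)
        ≤ (4 * C₄ + CGN ^ 8 * C₂ ^ 3 / 2) ^ ((1 : ℝ) / 2) := by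
  intro t
  have hsol' : SolvedPDE u := by
    intro x s
    have h := hsol x s
    rw [add_assoc] at h
    rw [real_inner_self_eq_norm_sq]
    exact eq_neg_of_add_eq_zero_left h
  have hcw : Continuous fun x => u x t := cont_slice_x hu t
  have hcp : Continuous fun x => pdx u x t := cont_slice_x (contDiff_pdx_s4 hu) t
  have hgn := hGN t
  set Q := ∫ x in (0:ℝ)..1, ‖u x t‖ ^ 4 with hQdef
  set P := ∫ x in (0:ℝ)..1, ‖u x t‖ ^ 2 with hPdef
  set X := ∫ x in (0:ℝ)..1, ‖pdx u x t‖ ^ 2 with hXdef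
  have hQ0 : 0 ≤ Q := intervalIntegral.integral_nonneg (by norm_num) (fun x _ => by positivity)
  have hP0 : 0 ≤ P := intervalIntegral.integral_nonneg (by norm_num) (fun x _ => by positivity)
  have hX0 : 0 ≤ X := intervalIntegral.integral_nonneg (by norm_num) (fun x _ => by positivity)
  -- momentum conservation : P = 2 C₂
  have hPC : P = 2 * C₂ := by
    have h := F2_conserved hu hsol' hper t
    rw [← hC₂] at h
    rw [intervalIntegral.integral_const_mul] at h
    rw [hPdef]; linarith
  -- energy conservation : 1/2 X - 1/8 Q = C₄
  have hEC : 1/2 * X - 1/8 * Q = C₄ := by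
    have h := F4_conserved hu hsol' hper t
    rw [← hC₄] at h
    rw [intervalIntegral.integral_sub (f := fun x => (1:ℝ)/2 * ‖pdx u x t‖^2) (g := fun x => (1:ℝ)/8 * ‖u x t‖^4)
        ((continuous_const.mul ((hcp.norm.pow 2))).intervalIntegrable 0 1)
        ((continuous_const.mul ((hcw.norm.pow 4))).intervalIntegrable 0 1),
      intervalIntegral.integral_const_mul, intervalIntegral.integral_const_mul] at h
    rw [hXdef, hQdef]; linarith
  -- Gagliardo–Nirenberg to the fourth power
  have h4 : Q ≤ CGN^4 * P^((3:ℝ)/2) * X^((1:ℝ)/2) := by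
    have h := pow_le_pow_left₀ (Real.rpow_nonneg hQ0 _) hgn 4
    calc Q = (Q^((1:ℝ)/4))^(4:ℕ) := by
          rw [← Real.rpow_natCast (Q^((1:ℝ)/4)) 4, ← Real.rpow_mul hQ0]; norm_num
      _ ≤ (CGN * P^((3:ℝ)/8) * X^((1:ℝ)/8))^(4:ℕ) := h
      _ = CGN^4 * P^((3:ℝ)/2) * X^((1:ℝ)/2) := by
          rw [mul_pow, mul_pow, ← Real.rpow_natCast (P^((3:ℝ)/8)) 4, ← Real.rpow_mul hP0,
            ← Real.rpow_natCast (X^((1:ℝ)/8)) 4, ← Real.rpow_mul hX0]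
          norm_num
  set s := X^((1:ℝ)/2) with hsdef
  have hs0 : 0 ≤ s := Real.rpow_nonneg hX0 _
  have hs2 : s^2 = X := by
    rw [hsdef, ← Real.rpow_natCast (X^((1:ℝ)/2)) 2, ← Real.rpow_mul hX0]
    norm_num
  have hP32 : (P^((3:ℝ)/2))^2 = P^3 := by
    rw [← Real.rpow_natCast (P^((3:ℝ)/2)) 2, ← Real.rpow_mul hP0, ← Real.rpow_natCast P 3]
    norm_num
  have ha2 : (CGN^4 * P^((3:ℝ)/2) / 4)^2 = CGN^8 * C₂^3 / 2 := by
    rw [div_pow, mul_pow, hP32, hPC]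
    ring
  have key : X ≤ 4 * C₄ + CGN^8 * C₂^3 / 2 := by
    have h1 : s^2 ≤ 2 * C₄ + (CGN^4 * P^((3:ℝ)/2) / 4) * s := by
      rw [hs2]
      have : X = 2 * C₄ + Q / 4 := by linarith
      rw [this, hsdef]
      linarith
    nlinarith [sq_nonneg (CGN^4 * P^((3:ℝ)/2) / 4 - s), ha2, h1, hs2]
  exact Real.rpow_le_rpow hX0 key (by norm_num)
end

section
/- Let d ≥ 1, μ ∈ ℝ, c_μ ∈ ℝ, and let E ∈ ℝ^d be a unit vector (‖E‖ = 1). Define ξ_μ(x,t) = μ(x − c_μ) − μ³ t. Then the 1-soliton profile u(x,t) := (2μ / cosh(ξ_μ(x,t))) E is a smooth solution of the vmKdV equation u_t + (3/2)‖u‖² u_x + u_xxx = 0 on all of ℝ × ℝ. -/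
open Real MeasureTheory intervalIntegral InnerProductSpace ContDiff

lemma auxG0 (μ s : ℝ) :
    HasDerivAt (fun s => 2 * μ / Real.cosh s) (-2 * μ * Real.sinh s / Real.cosh s ^ 2) s := by
  have h := (hasDerivAt_const s (2 * μ)).div (Real.hasDerivAt_cosh s) (Real.cosh_pos s).ne'
  refine h.congr_deriv ?_
  have hc := (Real.cosh_pos s).ne'
  rw [div_eq_div_iff (pow_ne_zero _ hc) (pow_ne_zero _ hc)]
  ring

lemma auxG1 (μ s : ℝ) :
    HasDerivAt (fun s => -2 * μ * Real.sinh s / Real.cosh s ^ 2)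
      (-2 * μ * (Real.cosh s ^ 2 - 2 * Real.sinh s ^ 2) / Real.cosh s ^ 3) s := by
  have hnum : HasDerivAt (fun s => -2 * μ * Real.sinh s) (-2 * μ * Real.cosh s) s :=
    (Real.hasDerivAt_sinh s).const_mul _
  have hden : HasDerivAt (fun s => Real.cosh s ^ 2) (2 * Real.cosh s ^ 1 * Real.sinh s) s :=
    (Real.hasDerivAt_cosh s).pow 2
  have h := hnum.div hden (pow_ne_zero 2 (Real.cosh_pos s).ne')
  refine h.congr_deriv ?_
  have hc := (Real.cosh_pos s).ne'
  rw [div_eq_div_iff (pow_ne_zero _ (pow_ne_zero _ hc)) (pow_ne_zero _ hc)]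
  ring

lemma auxG2 (μ s : ℝ) :
    HasDerivAt (fun s => -2 * μ * (Real.cosh s ^ 2 - 2 * Real.sinh s ^ 2) / Real.cosh s ^ 3)
      (2 * μ * Real.sinh s * (5 * Real.cosh s ^ 2 - 6 * Real.sinh s ^ 2) / Real.cosh s ^ 4) s := by
  have hnum : HasDerivAt (fun s => -2 * μ * (Real.cosh s ^ 2 - 2 * Real.sinh s ^ 2))
      (-2 * μ * (2 * Real.cosh s ^ 1 * Real.sinh s - 2 * (2 * Real.sinh s ^ 1 * Real.cosh s))) s := by
    exact HasDerivAt.const_mul _ (((Real.hasDerivAt_cosh s).pow 2).sub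
      (((Real.hasDerivAt_sinh s).pow 2).const_mul 2))
  have hden : HasDerivAt (fun s => Real.cosh s ^ 3) (3 * Real.cosh s ^ 2 * Real.sinh s) s :=
    (Real.hasDerivAt_cosh s).pow 3
  have h := hnum.div hden (pow_ne_zero 3 (Real.cosh_pos s).ne')
  refine h.congr_deriv ?_
  have hc := (Real.cosh_pos s).ne'
  rw [div_eq_div_iff (pow_ne_zero _ (pow_ne_zero _ hc)) (pow_ne_zero _ hc)]
  ring

lemma scalarzero (μ s : ℝ) :
    (-2 * μ * Real.sinh s / Real.cosh s ^ 2) * (-μ ^ 3)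
      + (3 / 2 * (2 * μ / Real.cosh s) ^ 2) * ((-2 * μ * Real.sinh s / Real.cosh s ^ 2) * μ)
      + (2 * μ * Real.sinh s * (5 * Real.cosh s ^ 2 - 6 * Real.sinh s ^ 2) / Real.cosh s ^ 4) * μ * μ * μ
      = 0 := by
  have hc := (Real.cosh_pos s).ne'
  have h := Real.cosh_sq_sub_sinh_sq s
  field_simp
  linear_combination (12 * μ ^ 4 * Real.sinh s) * h

theorem vmkdv_one_soliton (d : ℕ) (hd : 1 ≤ d) (μ cμ : ℝ)
    (E : EuclideanSpace ℝ (Fin d)) (hE : ‖E‖ = 1) :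
    ContDiff ℝ ∞
        (Function.uncurry fun x t =>
          (2 * μ / Real.cosh (μ * (x - cμ) - μ ^ 3 * t)) • E)
      ∧ IsVmKdV fun x t =>
          (2 * μ / Real.cosh (μ * (x - cμ) - μ ^ 3 * t)) • E := by
  set ξ : ℝ → ℝ → ℝ := fun x t => μ * (x - cμ) - μ ^ 3 * t with hξ
  have dξx : ∀ x t : ℝ, HasDerivAt (fun y => ξ y t) μ x := by
    intro x t
    have : HasDerivAt (fun y : ℝ => μ * (y - cμ)) (μ * 1) x :=
      ((hasDerivAt_id x).sub_const cμ).const_mul μ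
    simpa [hξ] using this.sub_const (μ ^ 3 * t)
  have dξt : ∀ x t : ℝ, HasDerivAt (fun s => ξ x s) (-μ ^ 3) t := by
    intro x t
    have : HasDerivAt (fun s : ℝ => μ ^ 3 * s) (μ ^ 3) t := by
      simpa using (hasDerivAt_id t).const_mul (μ ^ 3)
    simpa using this.const_sub (μ * (x - cμ))
  -- generic: space derivative of a composed-and-smul function
  have keyx : ∀ (G G' : ℝ → ℝ), (∀ s, HasDerivAt G (G' s) s) →
      pdx (fun x t => G (ξ x t) • E) = fun x t => (G' (ξ x t) * μ) • E := by
    intro G G' hG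
    funext x t
    exact (((hG (ξ x t)).comp x (dξx x t)).smul_const E).deriv
  constructor
  · have h1 : ContDiff ℝ ∞ (fun p : ℝ × ℝ => μ * (p.1 - cμ) - μ ^ 3 * p.2) := by
      fun_prop
    have h2 : ContDiff ℝ ∞ (fun p : ℝ × ℝ =>
        2 * μ / Real.cosh (μ * (p.1 - cμ) - μ ^ 3 * p.2)) := by
      apply ContDiff.div contDiff_const (Real.contDiff_cosh.comp h1)
      exact fun p => (Real.cosh_pos _).ne'
    exact h2.smul contDiff_const
  · intro x t
    have e1 : pdx (fun x t => (2 * μ / Real.cosh (ξ x t)) • E)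
        = fun x t => ((-2 * μ * Real.sinh (ξ x t) / Real.cosh (ξ x t) ^ 2) * μ) • E :=
      keyx _ _ (auxG0 μ)
    have e2 : pdx (fun x t => ((-2 * μ * Real.sinh (ξ x t) / Real.cosh (ξ x t) ^ 2) * μ) • E)
        = fun x t => ((-2 * μ * (Real.cosh (ξ x t) ^ 2 - 2 * Real.sinh (ξ x t) ^ 2)
            / Real.cosh (ξ x t) ^ 3) * μ * μ) • E := by
      have := keyx (fun s => (-2 * μ * Real.sinh s / Real.cosh s ^ 2) * μ)
        (fun s => (-2 * μ * (Real.cosh s ^ 2 - 2 * Real.sinh s ^ 2) / Real.cosh s ^ 3) * μ)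
        (fun s => (auxG1 μ s).mul_const μ)
      simpa using this
    have e3 : pdx (fun x t => ((-2 * μ * (Real.cosh (ξ x t) ^ 2 - 2 * Real.sinh (ξ x t) ^ 2)
            / Real.cosh (ξ x t) ^ 3) * μ * μ) • E)
        = fun x t => ((2 * μ * Real.sinh (ξ x t) * (5 * Real.cosh (ξ x t) ^ 2
            - 6 * Real.sinh (ξ x t) ^ 2) / Real.cosh (ξ x t) ^ 4) * μ * μ * μ) • E := by
      have := keyx
        (fun s => (-2 * μ * (Real.cosh s ^ 2 - 2 * Real.sinh s ^ 2) / Real.cosh s ^ 3) * μ * μ)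
        (fun s => (2 * μ * Real.sinh s * (5 * Real.cosh s ^ 2 - 6 * Real.sinh s ^ 2)
            / Real.cosh s ^ 4) * μ * μ)
        (fun s => ((auxG2 μ s).mul_const μ).mul_const μ)
      simpa [mul_assoc, mul_comm, mul_left_comm] using this
    have et : pdt (fun x t => (2 * μ / Real.cosh (ξ x t)) • E) x t
        = ((-2 * μ * Real.sinh (ξ x t) / Real.cosh (ξ x t) ^ 2) * (-μ ^ 3)) • E :=
      (((auxG0 μ (ξ x t)).comp t (dξt x t)).smul_const E).deriv
    have hnorm : ‖(2 * μ / Real.cosh (ξ x t)) • E‖ ^ 2 = (2 * μ / Real.cosh (ξ x t)) ^ 2 := by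
      rw [norm_smul, hE, mul_one, Real.norm_eq_abs, sq_abs]
    show pdt (fun x t => (2 * μ / Real.cosh (ξ x t)) • E) x t
        + ((3:ℝ)/2 * ‖(2 * μ / Real.cosh (ξ x t)) • E‖ ^ 2) •
          pdx (fun x t => (2 * μ / Real.cosh (ξ x t)) • E) x t
        + pdx (pdx (pdx (fun x t => (2 * μ / Real.cosh (ξ x t)) • E))) x t = 0
    rw [e1, e2, e3, et, hnorm]
    rw [smul_smul, ← add_smul, ← add_smul]
    rw [show (-2 * μ * Real.sinh (ξ x t) / Real.cosh (ξ x t) ^ 2) * (-μ ^ 3)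
      + (3/2 * (2 * μ / Real.cosh (ξ x t)) ^ 2) * ((-2 * μ * Real.sinh (ξ x t) / Real.cosh (ξ x t) ^ 2) * μ)
      + (2 * μ * Real.sinh (ξ x t) * (5 * Real.cosh (ξ x t) ^ 2 - 6 * Real.sinh (ξ x t) ^ 2)
          / Real.cosh (ξ x t) ^ 4) * μ * μ * μ = 0 from scalarzero μ (ξ x t), zero_smul]
end

section
/- Let E₁, E₂ ∈ ℝ² be unit vectors, let μ, ν ∈ ℝ with μ ≠ ν and μ ≠ −ν, and let c_μ, c_ν ∈ ℝ. Define ξ_μ(x,t) = μ(x − c_μ) − μ³t and ξ_ν(x,t) = ν(x − c_ν) − ν³t, F_{μ,ν} = 2(ν² − μ²) ν cosh(ξ_μ), F_{ν,μ} = 2(μ² − ν²) μ cosh(ξ_ν), and G = (μ² + ν²) cosh(ξ_μ) cosh(ξ_ν) − 2μν sinh(ξ_μ) sinh(ξ_ν) − 2μν (E₁·E₂). Assume G(x,t) ≠ 0 for all (x,t) ∈ ℝ × ℝ. Then the 2-soliton profile u(x,t) := (F_{μ,ν}(x,t)/G(x,t)) E₁ + (F_{ν,μ}(x,t)/G(x,t))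 E₂ is a smooth solution of the vmKdV equation u_t + (3/2)‖u‖² u_x + u_xxx = 0 on all of ℝ × ℝ. -/
open Real MeasureTheory intervalIntegral InnerProductSpace ContDiff

set_option maxHeartbeats 2000000

open Real

lemma hmono {X Y : ℝ → ℝ} {x a b : ℝ}
    (hX : HasDerivAt X (a * X x) x) (hY : HasDerivAt Y (b * Y x) x)
    (c c' : ℝ) (i j : ℕ) (h' : c' = c * ((i : ℝ) * a + (j : ℝ) * b)) :
    HasDerivAt (fun z => c * X z ^ i * Y z ^ j) (c' * X x ^ i * Y x ^ j) x := by
  have h := ((hX.pow i).const_mul c).mul (hY.pow j)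
  have e : c * ((i:ℝ) * X x ^ (i-1) * (a * X x)) * Y x ^ j
      + c * X x ^ i * ((j:ℝ) * Y x ^ (j-1) * (b * Y x)) = c' * X x ^ i * Y x ^ j := by
    subst h'
    rcases i with _|i <;> rcases j with _|j <;> simp [pow_succ] <;> push_cast <;> ring
  exact e ▸ h

lemma hmono' {X Y : ℝ → ℝ} {x a b : ℝ}
    (hX : HasDerivAt X (a * X x) x) (hY : HasDerivAt Y (b * Y x) x)
    (c : ℝ) (i j : ℕ) :
    HasDerivAt (fun z => c * X z ^ i * Y z ^ j)
      (c * ((i : ℝ) * a + (j : ℝ) * b) * X x ^ i * Y x ^ j) x :=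
  hmono hX hY c _ i j rfl

lemma HDA_congr {f : ℝ → ℝ} {a b x : ℝ} (h : HasDerivAt f a x) (e : b = a) :
    HasDerivAt f b x := e ▸ h

noncomputable def Dd (m n e p q : ℝ) : ℝ :=
  ((1:ℝ) * m ^ 2 + (-2:ℝ) * m * n + (1:ℝ) * n ^ 2) * p ^ 2 * q ^ 2 + ((1:ℝ) * m ^ 2 + (2:ℝ) * m * n + (1:ℝ) * n ^ 2) * p ^ 2 * q ^ 0 + ((-8:ℝ) * m * n * e) * p ^ 1 * q ^ 1 + ((1:ℝ) * m ^ 2 + (2:ℝ) * m * n + (1:ℝ) * n ^ 2) * p ^ 0 * q ^ 2 + ((1:ℝ) * m ^ 2 + (-2:ℝ) * m * n + (1:ℝ) * n ^ 2) * p ^ 0 * q ^ 0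

noncomputable def N1d (m n e p q : ℝ) : ℝ :=
  ((-4:ℝ) * m ^ 2 * n + (4:ℝ) * n ^ 3) * p ^ 2 * q ^ 1 + ((-4:ℝ) * m ^ 2 * n + (4:ℝ) * n ^ 3) * p ^ 0 * q ^ 1

noncomputable def A2s (m n e p q : ℝ) : ℝ :=
  ((4:ℝ) * m ^ 4 * n ^ 2 + (-8:ℝ) * m ^ 3 * n ^ 3 + (8:ℝ) * m * n ^ 5 + (-4:ℝ) * n ^ 6) * p ^ 4 * q ^ 3 + ((-4:ℝ) * m ^ 4 * n ^ 2 + (-8:ℝ) * m ^ 3 * n ^ 3 + (8:ℝ) * m * n ^ 5 + (4:ℝ) * n ^ 6) * p ^ 4 * q ^ 1 + ((32:ℝ) * m ^ 4 * n ^ 2 * e + (-32:ℝ) * m ^ 2 * n ^ 4 * e) * p ^ 3 * q ^ 2 + ((-24:ℝ) * m ^ 4 * n ^ 2 + (32:ℝ) * m ^ 2 * n ^ 4 + (-8:ℝ) * n ^ 6) * p ^ 2 * q ^ 3 + ((24:ℝ) * m ^ 4 * n ^ 2 + (-32:ℝ) * m ^ 2 * n ^ 4 + (8:ℝ) * n ^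 6) * p ^ 2 * q ^ 1 + ((-32:ℝ) * m ^ 4 * n ^ 2 * e + (32:ℝ) * m ^ 2 * n ^ 4 * e) * p ^ 1 * q ^ 2 + ((4:ℝ) * m ^ 4 * n ^ 2 + (8:ℝ) * m ^ 3 * n ^ 3 + (-8:ℝ) * m * n ^ 5 + (-4:ℝ) * n ^ 6) * p ^ 0 * q ^ 3 + ((-4:ℝ) * m ^ 4 * n ^ 2 + (8:ℝ) * m ^ 3 * n ^ 3 + (-8:ℝ) * m * n ^ 5 + (4:ℝ) * n ^ 6) * p ^ 0 * q ^ 1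

noncomputable def B2s (m n e p q : ℝ) : ℝ :=
  ((-4:ℝ) * m ^ 4 * n ^ 4 + (8:ℝ) * m ^ 3 * n ^ 5 + (-8:ℝ) * m * n ^ 7 + (4:ℝ) * n ^ 8) * p ^ 4 * q ^ 3 + ((4:ℝ) * m ^ 4 * n ^ 4 + (8:ℝ) * m ^ 3 * n ^ 5 + (-8:ℝ) * m * n ^ 7 + (-4:ℝ) * n ^ 8) * p ^ 4 * q ^ 1 + ((-32:ℝ) * m ^ 6 * n ^ 2 * e + (32:ℝ) * m ^ 4 * n ^ 4 * e) * p ^ 3 * q ^ 2 + ((32:ℝ) * m ^ 6 * n ^ 2 + (-40:ℝ) * m ^ 4 * n ^ 4 + (8:ℝ) * n ^ 8) * p ^ 2 * q ^ 3 + ((-32:ℝ) * m ^ 6 * n ^ 2 + (40:ℝ) * m ^ 4 * n ^ 4 + (-8:ℝ) * n ^ 8) * p ^ 2 * q ^ 1 + ((32:ℝ) * m ^ 6 * n ^ 2 * e + (-32:ℝ) * m ^ 4 * n ^ 4 * e) * p ^ 1 * q ^ 2 + ((-4:ℝ) * m ^ 4 * n ^ 4 + (-8:ℝ) * m ^ 3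 * n ^ 5 + (8:ℝ) * m * n ^ 7 + (4:ℝ) * n ^ 8) * p ^ 0 * q ^ 3 + ((4:ℝ) * m ^ 4 * n ^ 4 + (-8:ℝ) * m ^ 3 * n ^ 5 + (8:ℝ) * m * n ^ 7 + (-4:ℝ) * n ^ 8) * p ^ 0 * q ^ 1

noncomputable def A3sc0 (m n e p q : ℝ) : ℝ :=
  ((-4:ℝ) * m ^ 6 * n ^ 3 + (16:ℝ) * m ^ 5 * n ^ 4 + (-20:ℝ) * m ^ 4 * n ^ 5 + (20:ℝ) * m ^ 2 * n ^ 7 + (-16:ℝ) * m * n ^ 8 + (4:ℝ) * n ^ 9) * p ^ 6 * q ^ 5 + ((24:ℝ) * m ^ 6 * n ^ 3 + (-72:ℝ) * m ^ 4 * n ^ 5 + (72:ℝ) * m ^ 2 * n ^ 7 + (-24:ℝ) * n ^ 9) * p ^ 6 * q ^ 3 + ((-4:ℝ) * m ^ 6 * n ^ 3 + (-16:ℝ) * m ^ 5 * n ^ 4 + (-20:ℝ) * m ^ 4 * n ^ 5 + (20:ℝ) * m ^ 2 * n ^ 7 + (16:ℝ) * m * n ^ 8 + (4:ℝ) * n ^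 9) * p ^ 6 * q ^ 1 + ((-32:ℝ) * m ^ 7 * n ^ 2 * e + (-64:ℝ) * m ^ 6 * n ^ 3 * e + (224:ℝ) * m ^ 5 * n ^ 4 * e + (-224:ℝ) * m ^ 3 * n ^ 6 * e + (64:ℝ) * m ^ 2 * n ^ 7 * e + (32:ℝ) * m * n ^ 8 * e) * p ^ 5 * q ^ 4 + ((-32:ℝ) * m ^ 7 * n ^ 2 * e + (64:ℝ) * m ^ 6 * n ^ 3 * e + (224:ℝ) * m ^ 5 * n ^ 4 * e + (-224:ℝ) * m ^ 3 * n ^ 6 * e + (-64:ℝ) * m ^ 2 * n ^ 7 * e + (32:ℝ) * m * n ^ 8 * e) * p ^ 5 * q ^ 2 + ((64:ℝ) * m ^ 7 * n ^ 2 + (-76:ℝ) * m ^ 6 * n ^ 3 + (-112:ℝ) * m ^ 5 * n ^ 4 + (132:ℝ) * m ^ 4 * n ^ 5 + (64:ℝ) * m ^ 3 * n ^ 6 + (-68:ℝ) * m ^ 2 * n ^ 7 + (-16:ℝ) * m * n ^ 8 + (12:ℝ) * n ^ 9) * p ^ 4 * q ^ 5 + ((-256:ℝ) * m ^ 6 *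 n ^ 3 * e ^ 2 + (-56:ℝ) * m ^ 6 * n ^ 3 + (256:ℝ) * m ^ 4 * n ^ 5 * e ^ 2 + (-88:ℝ) * m ^ 4 * n ^ 5 + (216:ℝ) * m ^ 2 * n ^ 7 + (-72:ℝ) * n ^ 9) * p ^ 4 * q ^ 3 + ((-64:ℝ) * m ^ 7 * n ^ 2 + (-76:ℝ) * m ^ 6 * n ^ 3 + (112:ℝ) * m ^ 5 * n ^ 4 + (132:ℝ) * m ^ 4 * n ^ 5 + (-64:ℝ) * m ^ 3 * n ^ 6 + (-68:ℝ) * m ^ 2 * n ^ 7 + (16:ℝ) * m * n ^ 8 + (12:ℝ) * n ^ 9) * p ^ 4 * q ^ 1 + ((192:ℝ) * m ^ 7 * n ^ 2 * e + (-64:ℝ) * m ^ 5 * n ^ 4 * e + (-192:ℝ) * m ^ 3 * n ^ 6 * e + (64:ℝ) * m * n ^ 8 * e) * p ^ 3 * q ^ 4 + ((192:ℝ) * m ^ 7 * n ^ 2 * e + (-64:ℝ) * m ^ 5 * n ^ 4 * e + (-192:ℝ) * m ^ 3 * n ^ 6 * e + (64:ℝ) * m * n ^ 8 * e) * p ^ 3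 * q ^ 2

noncomputable def A3sc1 (m n e p q : ℝ) : ℝ :=
  ((-64:ℝ) * m ^ 7 * n ^ 2 + (-76:ℝ) * m ^ 6 * n ^ 3 + (112:ℝ) * m ^ 5 * n ^ 4 + (132:ℝ) * m ^ 4 * n ^ 5 + (-64:ℝ) * m ^ 3 * n ^ 6 + (-68:ℝ) * m ^ 2 * n ^ 7 + (16:ℝ) * m * n ^ 8 + (12:ℝ) * n ^ 9) * p ^ 2 * q ^ 5 + ((-256:ℝ) * m ^ 6 * n ^ 3 * e ^ 2 + (-56:ℝ) * m ^ 6 * n ^ 3 + (256:ℝ) * m ^ 4 * n ^ 5 * e ^ 2 + (-88:ℝ) * m ^ 4 * n ^ 5 + (216:ℝ) * m ^ 2 * n ^ 7 + (-72:ℝ) * n ^ 9) * p ^ 2 * q ^ 3 + ((64:ℝ) * m ^ 7 * n ^ 2 + (-76:ℝ) * m ^ 6 * n ^ 3 + (-112:ℝ) * m ^ 5 * n ^ 4 + (132:ℝ) * m ^ 4 * n ^ 5 + (64:ℝ) * m ^ 3 * n ^ 6 + (-68:ℝ) * m ^ 2 * n ^ 7 + (-16:ℝ) * m * n ^ 8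 + (12:ℝ) * n ^ 9) * p ^ 2 * q ^ 1 + ((-32:ℝ) * m ^ 7 * n ^ 2 * e + (64:ℝ) * m ^ 6 * n ^ 3 * e + (224:ℝ) * m ^ 5 * n ^ 4 * e + (-224:ℝ) * m ^ 3 * n ^ 6 * e + (-64:ℝ) * m ^ 2 * n ^ 7 * e + (32:ℝ) * m * n ^ 8 * e) * p ^ 1 * q ^ 4 + ((-32:ℝ) * m ^ 7 * n ^ 2 * e + (-64:ℝ) * m ^ 6 * n ^ 3 * e + (224:ℝ) * m ^ 5 * n ^ 4 * e + (-224:ℝ) * m ^ 3 * n ^ 6 * e + (64:ℝ) * m ^ 2 * n ^ 7 * e + (32:ℝ) * m * n ^ 8 * e) * p ^ 1 * q ^ 2 + ((-4:ℝ) * m ^ 6 * n ^ 3 + (-16:ℝ) * m ^ 5 * n ^ 4 + (-20:ℝ) * m ^ 4 * n ^ 5 + (20:ℝ) * m ^ 2 * n ^ 7 + (16:ℝ) * m * n ^ 8 + (4:ℝ) * n ^ 9) * p ^ 0 * q ^ 5 + ((24:ℝ) * m ^ 6 * n ^ 3 + (-72:ℝ) * m ^ 4 * n ^ 5 + (72:ℝ)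 * m ^ 2 * n ^ 7 + (-24:ℝ) * n ^ 9) * p ^ 0 * q ^ 3 + ((-4:ℝ) * m ^ 6 * n ^ 3 + (16:ℝ) * m ^ 5 * n ^ 4 + (-20:ℝ) * m ^ 4 * n ^ 5 + (20:ℝ) * m ^ 2 * n ^ 7 + (-16:ℝ) * m * n ^ 8 + (4:ℝ) * n ^ 9) * p ^ 0 * q ^ 1

noncomputable def A3s (m n e p q : ℝ) : ℝ :=
  A3sc0 m n e p q + A3sc1 m n e p q

noncomputable def A4sc0 (m n e p q : ℝ) : ℝ :=
  ((4:ℝ) * m ^ 8 * n ^ 4 + (-24:ℝ) * m ^ 7 * n ^ 5 + (56:ℝ) * m ^ 6 * n ^ 6 + (-56:ℝ) * m ^ 5 * n ^ 7 + (56:ℝ) * m ^ 3 * n ^ 9 + (-56:ℝ) * m ^ 2 * n ^ 10 + (24:ℝ) * m * n ^ 11 + (-4:ℝ) * n ^ 12) * p ^ 8 * q ^ 7 + ((-92:ℝ) * m ^ 8 * n ^ 4 + (184:ℝ) * m ^ 7 * n ^ 5 + (184:ℝ) * m ^ 6 * n ^ 6 + (-552:ℝ) * m ^ 5 * n ^ 7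 + (552:ℝ) * m ^ 3 * n ^ 9 + (-184:ℝ) * m ^ 2 * n ^ 10 + (-184:ℝ) * m * n ^ 11 + (92:ℝ) * n ^ 12) * p ^ 8 * q ^ 5 + ((92:ℝ) * m ^ 8 * n ^ 4 + (184:ℝ) * m ^ 7 * n ^ 5 + (-184:ℝ) * m ^ 6 * n ^ 6 + (-552:ℝ) * m ^ 5 * n ^ 7 + (552:ℝ) * m ^ 3 * n ^ 9 + (184:ℝ) * m ^ 2 * n ^ 10 + (-184:ℝ) * m * n ^ 11 + (-92:ℝ) * n ^ 12) * p ^ 8 * q ^ 3 + ((-4:ℝ) * m ^ 8 * n ^ 4 + (-24:ℝ) * m ^ 7 * n ^ 5 + (-56:ℝ) * m ^ 6 * n ^ 6 + (-56:ℝ) * m ^ 5 * n ^ 7 + (56:ℝ) * m ^ 3 * n ^ 9 + (56:ℝ) * m ^ 2 * n ^ 10 + (24:ℝ) * m * n ^ 11 + (4:ℝ) * n ^ 12) * p ^ 8 * q ^ 1 + ((32:ℝ) * m ^ 10 * n ^ 2 * e + (64:ℝ) * m ^ 9 * n ^ 3 * e + (-224:ℝ) * m ^ 8 * n ^ 4 *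 e + (-448:ℝ) * m ^ 7 * n ^ 5 * e + (1248:ℝ) * m ^ 6 * n ^ 6 * e + (-192:ℝ) * m ^ 5 * n ^ 7 * e + (-1184:ℝ) * m ^ 4 * n ^ 8 * e + (704:ℝ) * m ^ 3 * n ^ 9 * e + (128:ℝ) * m ^ 2 * n ^ 10 * e + (-128:ℝ) * m * n ^ 11 * e) * p ^ 7 * q ^ 6 + ((64:ℝ) * m ^ 10 * n ^ 2 * e + (-1728:ℝ) * m ^ 8 * n ^ 4 * e + (4800:ℝ) * m ^ 6 * n ^ 6 * e + (-4672:ℝ) * m ^ 4 * n ^ 8 * e + (1536:ℝ) * m ^ 2 * n ^ 10 * e) * p ^ 7 * q ^ 4 + ((32:ℝ) * m ^ 10 * n ^ 2 * e + (-64:ℝ) * m ^ 9 * n ^ 3 * e + (-224:ℝ) * m ^ 8 * n ^ 4 * e + (448:ℝ) * m ^ 7 * n ^ 5 * e + (1248:ℝ) * m ^ 6 * n ^ 6 * e + (192:ℝ) * m ^ 5 * n ^ 7 * e + (-1184:ℝ) * m ^ 4 * n ^ 8 * e + (-704:ℝ) * m ^ 3 * n ^ 9 * e + (128:ℝ) *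 m ^ 2 * n ^ 10 * e + (128:ℝ) * m * n ^ 11 * e) * p ^ 7 * q ^ 2

noncomputable def A4sc1 (m n e p q : ℝ) : ℝ :=
  ((-128:ℝ) * m ^ 10 * n ^ 2 + (320:ℝ) * m ^ 9 * n ^ 3 + (48:ℝ) * m ^ 8 * n ^ 4 + (-624:ℝ) * m ^ 7 * n ^ 5 + (192:ℝ) * m ^ 6 * n ^ 6 + (464:ℝ) * m ^ 5 * n ^ 7 + (-160:ℝ) * m ^ 4 * n ^ 8 + (-208:ℝ) * m ^ 3 * n ^ 9 + (64:ℝ) * m ^ 2 * n ^ 10 + (48:ℝ) * m * n ^ 11 + (-16:ℝ) * n ^ 12) * p ^ 6 * q ^ 7 + ((-128:ℝ) * m ^ 10 * n ^ 2 + (1024:ℝ) * m ^ 9 * n ^ 3 * e ^ 2 + (448:ℝ) * m ^ 9 * n ^ 3 + (1024:ℝ) * m ^ 8 * n ^ 4 * e ^ 2 + (944:ℝ) * m ^ 8 * n ^ 4 + (-4608:ℝ) * m ^ 7 * n ^ 5 * e ^ 2 + (-1360:ℝ) * m ^ 7 * n ^ 5 + (-768:ℝ) * m ^ 6 * n ^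 6 * e ^ 2 + (-1856:ℝ) * m ^ 6 * n ^ 6 + (4608:ℝ) * m ^ 5 * n ^ 7 * e ^ 2 + (624:ℝ) * m ^ 5 * n ^ 7 + (2144:ℝ) * m ^ 4 * n ^ 8 + (-1024:ℝ) * m ^ 3 * n ^ 9 * e ^ 2 + (656:ℝ) * m ^ 3 * n ^ 9 + (-256:ℝ) * m ^ 2 * n ^ 10 * e ^ 2 + (-1472:ℝ) * m ^ 2 * n ^ 10 + (-368:ℝ) * m * n ^ 11 + (368:ℝ) * n ^ 12) * p ^ 6 * q ^ 5 + ((128:ℝ) * m ^ 10 * n ^ 2 + (1024:ℝ) * m ^ 9 * n ^ 3 * e ^ 2 + (448:ℝ) * m ^ 9 * n ^ 3 + (-1024:ℝ) * m ^ 8 * n ^ 4 * e ^ 2 + (-944:ℝ) * m ^ 8 * n ^ 4 + (-4608:ℝ) * m ^ 7 * n ^ 5 * e ^ 2 + (-1360:ℝ) * m ^ 7 * n ^ 5 + (768:ℝ) * m ^ 6 * n ^ 6 * e ^ 2 + (1856:ℝ) * m ^ 6 * n ^ 6 + (4608:ℝ) * m ^ 5 * n ^ 7 * e ^ 2 + (624:ℝ)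 * m ^ 5 * n ^ 7 + (-2144:ℝ) * m ^ 4 * n ^ 8 + (-1024:ℝ) * m ^ 3 * n ^ 9 * e ^ 2 + (656:ℝ) * m ^ 3 * n ^ 9 + (256:ℝ) * m ^ 2 * n ^ 10 * e ^ 2 + (1472:ℝ) * m ^ 2 * n ^ 10 + (-368:ℝ) * m * n ^ 11 + (-368:ℝ) * n ^ 12) * p ^ 6 * q ^ 3 + ((128:ℝ) * m ^ 10 * n ^ 2 + (320:ℝ) * m ^ 9 * n ^ 3 + (-48:ℝ) * m ^ 8 * n ^ 4 + (-624:ℝ) * m ^ 7 * n ^ 5 + (-192:ℝ) * m ^ 6 * n ^ 6 + (464:ℝ) * m ^ 5 * n ^ 7 + (160:ℝ) * m ^ 4 * n ^ 8 + (-208:ℝ) * m ^ 3 * n ^ 9 + (-64:ℝ) * m ^ 2 * n ^ 10 + (48:ℝ) * m * n ^ 11 + (16:ℝ) * n ^ 12) * p ^ 6 * q ^ 1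

noncomputable def A4sc2 (m n e p q : ℝ) : ℝ :=
  ((-736:ℝ) * m ^ 10 * n ^ 2 * e + (-320:ℝ) * m ^ 9 * n ^ 3 * e + (544:ℝ) * m ^ 8 * n ^ 4 * e + (3264:ℝ) * m ^ 7 * n ^ 5 * e + (480:ℝ) * m ^ 6 * n ^ 6 * e + (-5184:ℝ) * m ^ 5 * n ^ 7 * e + (-416:ℝ) * m ^ 4 * n ^ 8 * e + (2624:ℝ) * m ^ 3 * n ^ 9 * e + (128:ℝ) * m ^ 2 * n ^ 10 * e + (-384:ℝ) * m * n ^ 11 * e) * p ^ 5 * q ^ 6 + ((-1472:ℝ) * m ^ 10 * n ^ 2 * e + (2048:ℝ) * m ^ 8 * n ^ 4 * e ^ 3 + (5952:ℝ) * m ^ 8 * n ^ 4 * e + (-2048:ℝ) * m ^ 6 * n ^ 6 * e ^ 3 + (-2880:ℝ) * m ^ 6 * n ^ 6 * e + (-3136:ℝ) * m ^ 4 * n ^ 8 * e + (1536:ℝ) * m ^ 2 * n ^ 10 * e) * p ^ 5 * q ^ 4 + ((-736:ℝ) * m ^ 10 * n ^ 2 * e + (320:ℝ) * m ^ 9 *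 n ^ 3 * e + (544:ℝ) * m ^ 8 * n ^ 4 * e + (-3264:ℝ) * m ^ 7 * n ^ 5 * e + (480:ℝ) * m ^ 6 * n ^ 6 * e + (5184:ℝ) * m ^ 5 * n ^ 7 * e + (-416:ℝ) * m ^ 4 * n ^ 8 * e + (-2624:ℝ) * m ^ 3 * n ^ 9 * e + (128:ℝ) * m ^ 2 * n ^ 10 * e + (384:ℝ) * m * n ^ 11 * e) * p ^ 5 * q ^ 2 + ((512:ℝ) * m ^ 10 * n ^ 2 + (-1704:ℝ) * m ^ 8 * n ^ 4 + (2064:ℝ) * m ^ 6 * n ^ 6 + (-1088:ℝ) * m ^ 4 * n ^ 8 + (240:ℝ) * m ^ 2 * n ^ 10 + (-24:ℝ) * n ^ 12) * p ^ 4 * q ^ 7 + ((512:ℝ) * m ^ 10 * n ^ 2 + (-4096:ℝ) * m ^ 8 * n ^ 4 * e ^ 2 + (-1768:ℝ) * m ^ 8 * n ^ 4 + (4608:ℝ) * m ^ 6 * n ^ 6 * e ^ 2 + (-240:ℝ) * m ^ 6 * n ^ 6 + (3520:ℝ) * m ^ 4 * n ^ 8 + (-512:ℝ) * m ^ 2 *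 n ^ 10 * e ^ 2 + (-2576:ℝ) * m ^ 2 * n ^ 10 + (552:ℝ) * n ^ 12) * p ^ 4 * q ^ 5 + ((-512:ℝ) * m ^ 10 * n ^ 2 + (4096:ℝ) * m ^ 8 * n ^ 4 * e ^ 2 + (1768:ℝ) * m ^ 8 * n ^ 4 + (-4608:ℝ) * m ^ 6 * n ^ 6 * e ^ 2 + (240:ℝ) * m ^ 6 * n ^ 6 + (-3520:ℝ) * m ^ 4 * n ^ 8 + (512:ℝ) * m ^ 2 * n ^ 10 * e ^ 2 + (2576:ℝ) * m ^ 2 * n ^ 10 + (-552:ℝ) * n ^ 12) * p ^ 4 * q ^ 3 + ((-512:ℝ) * m ^ 10 * n ^ 2 + (1704:ℝ) * m ^ 8 * n ^ 4 + (-2064:ℝ) * m ^ 6 * n ^ 6 + (1088:ℝ) * m ^ 4 * n ^ 8 + (-240:ℝ) * m ^ 2 * n ^ 10 + (24:ℝ) * n ^ 12) * p ^ 4 * q ^ 1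

noncomputable def A4sc3 (m n e p q : ℝ) : ℝ :=
  ((736:ℝ) * m ^ 10 * n ^ 2 * e + (-320:ℝ) * m ^ 9 * n ^ 3 * e + (-544:ℝ) * m ^ 8 * n ^ 4 * e + (3264:ℝ) * m ^ 7 * n ^ 5 * e + (-480:ℝ) * m ^ 6 * n ^ 6 * e + (-5184:ℝ) * m ^ 5 * n ^ 7 * e + (416:ℝ) * m ^ 4 * n ^ 8 * e + (2624:ℝ) * m ^ 3 * n ^ 9 * e + (-128:ℝ) * m ^ 2 * n ^ 10 * e + (-384:ℝ) * m * n ^ 11 * e) * p ^ 3 * q ^ 6 + ((1472:ℝ) * m ^ 10 * n ^ 2 * e + (-2048:ℝ) * m ^ 8 * n ^ 4 * e ^ 3 + (-5952:ℝ) * m ^ 8 * n ^ 4 * e + (2048:ℝ) * m ^ 6 * n ^ 6 * e ^ 3 + (2880:ℝ) * m ^ 6 * n ^ 6 * e + (3136:ℝ) * m ^ 4 * n ^ 8 * e + (-1536:ℝ) * m ^ 2 * n ^ 10 * e) * p ^ 3 * q ^ 4 + ((736:ℝ) * m ^ 10 * n ^ 2 * e + (320:ℝ) * m ^ 9 * n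 ^ 3 * e + (-544:ℝ) * m ^ 8 * n ^ 4 * e + (-3264:ℝ) * m ^ 7 * n ^ 5 * e + (-480:ℝ) * m ^ 6 * n ^ 6 * e + (5184:ℝ) * m ^ 5 * n ^ 7 * e + (416:ℝ) * m ^ 4 * n ^ 8 * e + (-2624:ℝ) * m ^ 3 * n ^ 9 * e + (-128:ℝ) * m ^ 2 * n ^ 10 * e + (384:ℝ) * m * n ^ 11 * e) * p ^ 3 * q ^ 2 + ((-128:ℝ) * m ^ 10 * n ^ 2 + (-320:ℝ) * m ^ 9 * n ^ 3 + (48:ℝ) * m ^ 8 * n ^ 4 + (624:ℝ) * m ^ 7 * n ^ 5 + (192:ℝ) * m ^ 6 * n ^ 6 + (-464:ℝ) * m ^ 5 * n ^ 7 + (-160:ℝ) * m ^ 4 * n ^ 8 + (208:ℝ) * m ^ 3 * n ^ 9 + (64:ℝ) * m ^ 2 * n ^ 10 + (-48:ℝ) * m * n ^ 11 + (-16:ℝ) * n ^ 12) * p ^ 2 * q ^ 7 + ((-128:ℝ) * m ^ 10 * n ^ 2 + (-1024:ℝ) * m ^ 9 * n ^ 3 * e ^ 2 + (-448:ℝ)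 * m ^ 9 * n ^ 3 + (1024:ℝ) * m ^ 8 * n ^ 4 * e ^ 2 + (944:ℝ) * m ^ 8 * n ^ 4 + (4608:ℝ) * m ^ 7 * n ^ 5 * e ^ 2 + (1360:ℝ) * m ^ 7 * n ^ 5 + (-768:ℝ) * m ^ 6 * n ^ 6 * e ^ 2 + (-1856:ℝ) * m ^ 6 * n ^ 6 + (-4608:ℝ) * m ^ 5 * n ^ 7 * e ^ 2 + (-624:ℝ) * m ^ 5 * n ^ 7 + (2144:ℝ) * m ^ 4 * n ^ 8 + (1024:ℝ) * m ^ 3 * n ^ 9 * e ^ 2 + (-656:ℝ) * m ^ 3 * n ^ 9 + (-256:ℝ) * m ^ 2 * n ^ 10 * e ^ 2 + (-1472:ℝ) * m ^ 2 * n ^ 10 + (368:ℝ) * m * n ^ 11 + (368:ℝ) * n ^ 12) * p ^ 2 * q ^ 5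

noncomputable def A4sc4 (m n e p q : ℝ) : ℝ :=
  ((128:ℝ) * m ^ 10 * n ^ 2 + (-1024:ℝ) * m ^ 9 * n ^ 3 * e ^ 2 + (-448:ℝ) * m ^ 9 * n ^ 3 + (-1024:ℝ) * m ^ 8 * n ^ 4 * e ^ 2 + (-944:ℝ) * m ^ 8 * n ^ 4 + (4608:ℝ) * m ^ 7 * n ^ 5 * e ^ 2 + (1360:ℝ) * m ^ 7 * n ^ 5 + (768:ℝ) * m ^ 6 * n ^ 6 * e ^ 2 + (1856:ℝ) * m ^ 6 * n ^ 6 + (-4608:ℝ) * m ^ 5 * n ^ 7 * e ^ 2 + (-624:ℝ) * m ^ 5 * n ^ 7 + (-2144:ℝ) * m ^ 4 * n ^ 8 + (1024:ℝ) * m ^ 3 * n ^ 9 * e ^ 2 + (-656:ℝ) * m ^ 3 * n ^ 9 + (256:ℝ) * m ^ 2 * n ^ 10 * e ^ 2 + (1472:ℝ) * m ^ 2 * n ^ 10 + (368:ℝ) * m * n ^ 11 + (-368:ℝ) * n ^ 12) * p ^ 2 * q ^ 3 + ((128:ℝ) * m ^ 10 * n ^ 2 + (-320:ℝ) * m ^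 9 * n ^ 3 + (-48:ℝ) * m ^ 8 * n ^ 4 + (624:ℝ) * m ^ 7 * n ^ 5 + (-192:ℝ) * m ^ 6 * n ^ 6 + (-464:ℝ) * m ^ 5 * n ^ 7 + (160:ℝ) * m ^ 4 * n ^ 8 + (208:ℝ) * m ^ 3 * n ^ 9 + (-64:ℝ) * m ^ 2 * n ^ 10 + (-48:ℝ) * m * n ^ 11 + (16:ℝ) * n ^ 12) * p ^ 2 * q ^ 1 + ((-32:ℝ) * m ^ 10 * n ^ 2 * e + (64:ℝ) * m ^ 9 * n ^ 3 * e + (224:ℝ) * m ^ 8 * n ^ 4 * e + (-448:ℝ) * m ^ 7 * n ^ 5 * e + (-1248:ℝ) * m ^ 6 * n ^ 6 * e + (-192:ℝ) * m ^ 5 * n ^ 7 * e + (1184:ℝ) * m ^ 4 * n ^ 8 * e + (704:ℝ) * m ^ 3 * n ^ 9 * e + (-128:ℝ) * m ^ 2 * n ^ 10 * e + (-128:ℝ) * m * n ^ 11 * e) * p ^ 1 * q ^ 6 + ((-64:ℝ) * m ^ 10 * n ^ 2 * e + (1728:ℝ) * m ^ 8 * n ^ 4 * e + (-4800:ℝ)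 * m ^ 6 * n ^ 6 * e + (4672:ℝ) * m ^ 4 * n ^ 8 * e + (-1536:ℝ) * m ^ 2 * n ^ 10 * e) * p ^ 1 * q ^ 4 + ((-32:ℝ) * m ^ 10 * n ^ 2 * e + (-64:ℝ) * m ^ 9 * n ^ 3 * e + (224:ℝ) * m ^ 8 * n ^ 4 * e + (448:ℝ) * m ^ 7 * n ^ 5 * e + (-1248:ℝ) * m ^ 6 * n ^ 6 * e + (192:ℝ) * m ^ 5 * n ^ 7 * e + (1184:ℝ) * m ^ 4 * n ^ 8 * e + (-704:ℝ) * m ^ 3 * n ^ 9 * e + (-128:ℝ) * m ^ 2 * n ^ 10 * e + (128:ℝ) * m * n ^ 11 * e) * p ^ 1 * q ^ 2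

noncomputable def A4sc5 (m n e p q : ℝ) : ℝ :=
  ((4:ℝ) * m ^ 8 * n ^ 4 + (24:ℝ) * m ^ 7 * n ^ 5 + (56:ℝ) * m ^ 6 * n ^ 6 + (56:ℝ) * m ^ 5 * n ^ 7 + (-56:ℝ) * m ^ 3 * n ^ 9 + (-56:ℝ) * m ^ 2 * n ^ 10 + (-24:ℝ) * m * n ^ 11 + (-4:ℝ) * n ^ 12) * p ^ 0 * q ^ 7 + ((-92:ℝ) * m ^ 8 * n ^ 4 + (-184:ℝ) * m ^ 7 * n ^ 5 + (184:ℝ) * m ^ 6 * n ^ 6 + (552:ℝ) * m ^ 5 * n ^ 7 + (-552:ℝ) * m ^ 3 * n ^ 9 + (-184:ℝ) * m ^ 2 * n ^ 10 + (184:ℝ) * m * n ^ 11 + (92:ℝ) * n ^ 12) * p ^ 0 * q ^ 5 + ((92:ℝ) * m ^ 8 * n ^ 4 + (-184:ℝ) * m ^ 7 * n ^ 5 + (-184:ℝ) * m ^ 6 * n ^ 6 + (552:ℝ) * m ^ 5 * n ^ 7 + (-552:ℝ) * m ^ 3 * n ^ 9 + (184:ℝ) * m ^ 2 * n ^ 10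 + (184:ℝ) * m * n ^ 11 + (-92:ℝ) * n ^ 12) * p ^ 0 * q ^ 3 + ((-4:ℝ) * m ^ 8 * n ^ 4 + (24:ℝ) * m ^ 7 * n ^ 5 + (-56:ℝ) * m ^ 6 * n ^ 6 + (56:ℝ) * m ^ 5 * n ^ 7 + (-56:ℝ) * m ^ 3 * n ^ 9 + (56:ℝ) * m ^ 2 * n ^ 10 + (-24:ℝ) * m * n ^ 11 + (4:ℝ) * n ^ 12) * p ^ 0 * q ^ 1

noncomputable def A4s (m n e p q : ℝ) : ℝ :=
  A4sc0 m n e p q + A4sc1 m n e p q + A4sc2 m n e p q + A4sc3 m n e p q + A4sc4 m n e p q + A4sc5 m n e p q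

noncomputable def LDx (m n e p q : ℝ) : ℝ :=
  ((2:ℝ) * m ^ 3 + (-2:ℝ) * m ^ 2 * n + (-2:ℝ) * m * n ^ 2 + (2:ℝ) * n ^ 3) * p ^ 2 * q ^ 2 + ((2:ℝ) * m ^ 3 + (4:ℝ) * m ^ 2 * n + (2:ℝ) * m * n ^ 2) * p ^ 2 * q ^ 0 + ((-8:ℝ) * m ^ 2 * n * e + (-8:ℝ) * m * n ^ 2 * e) * p ^ 1 * q ^ 1 + ((2:ℝ) * m ^ 2 * n + (4:ℝ) * m * n ^ 2 + (2:ℝ) * n ^ 3) * p ^ 0 * q ^ 2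

noncomputable def LDt (m n e p q : ℝ) : ℝ :=
  ((-2:ℝ) * m ^ 5 + (4:ℝ) * m ^ 4 * n + (-2:ℝ) * m ^ 3 * n ^ 2 + (-2:ℝ) * m ^ 2 * n ^ 3 + (4:ℝ) * m * n ^ 4 + (-2:ℝ) * n ^ 5) * p ^ 2 * q ^ 2 + ((-2:ℝ) * m ^ 5 + (-4:ℝ) * m ^ 4 * n + (-2:ℝ) * m ^ 3 * n ^ 2) * p ^ 2 * q ^ 0 + ((8:ℝ) * m ^ 4 * n * e + (8:ℝ) * m * n ^ 4 * e) * p ^ 1 * q ^ 1 + ((-2:ℝ) * m ^ 2 * n ^ 3 + (-4:ℝ) * m * n ^ 4 + (-2:ℝ) * n ^ 5) * p ^ 0 * q ^ 2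

noncomputable def LN1x (m n e p q : ℝ) : ℝ :=
  ((-8:ℝ) * m ^ 3 * n + (-4:ℝ) * m ^ 2 * n ^ 2 + (8:ℝ) * m * n ^ 3 + (4:ℝ) * n ^ 4) * p ^ 2 * q ^ 1 + ((-4:ℝ) * m ^ 2 * n ^ 2 + (4:ℝ) * n ^ 4) * p ^ 0 * q ^ 1

noncomputable def LN1t (m n e p q : ℝ) : ℝ :=
  ((8:ℝ) * m ^ 5 * n + (-8:ℝ) * m ^ 3 * n ^ 3 + (4:ℝ) * m ^ 2 * n ^ 4 + (-4:ℝ) * n ^ 6) * p ^ 2 * q ^ 1 + ((4:ℝ) * m ^ 2 * n ^ 4 + (-4:ℝ) * n ^ 6) * p ^ 0 * q ^ 1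

noncomputable def LA2x (m n e p q : ℝ) : ℝ :=
  ((16:ℝ) * m ^ 5 * n ^ 2 + (-20:ℝ) * m ^ 4 * n ^ 3 + (-24:ℝ) * m ^ 3 * n ^ 4 + (32:ℝ) * m ^ 2 * n ^ 5 + (8:ℝ) * m * n ^ 6 + (-12:ℝ) * n ^ 7) * p ^ 4 * q ^ 3 + ((-16:ℝ) * m ^ 5 * n ^ 2 + (-36:ℝ) * m ^ 4 * n ^ 3 + (-8:ℝ) * m ^ 3 * n ^ 4 + (32:ℝ) * m ^ 2 * n ^ 5 + (24:ℝ) * m * n ^ 6 + (4:ℝ) * n ^ 7) * p ^ 4 * q ^ 1 + ((96:ℝ) * m ^ 5 * n ^ 2 * e + (64:ℝ) * m ^ 4 * n ^ 3 * e + (-96:ℝ) * m ^ 3 * n ^ 4 * e + (-64:ℝ) * m ^ 2 * n ^ 5 * e) * p ^ 3 * q ^ 2 + ((-48:ℝ) * m ^ 5 * n ^ 2 + (-72:ℝ) * m ^ 4 * n ^ 3 + (64:ℝ) * m ^ 3 * n ^ 4 + (96:ℝ) * m ^ 2 * n ^ 5 + (-16:ℝ) * m * n ^ 6 + (-24:ℝ)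 * n ^ 7) * p ^ 2 * q ^ 3 + ((48:ℝ) * m ^ 5 * n ^ 2 + (24:ℝ) * m ^ 4 * n ^ 3 + (-64:ℝ) * m ^ 3 * n ^ 4 + (-32:ℝ) * m ^ 2 * n ^ 5 + (16:ℝ) * m * n ^ 6 + (8:ℝ) * n ^ 7) * p ^ 2 * q ^ 1 + ((-32:ℝ) * m ^ 5 * n ^ 2 * e + (-64:ℝ) * m ^ 4 * n ^ 3 * e + (32:ℝ) * m ^ 3 * n ^ 4 * e + (64:ℝ) * m ^ 2 * n ^ 5 * e) * p ^ 1 * q ^ 2 + ((12:ℝ) * m ^ 4 * n ^ 3 + (24:ℝ) * m ^ 3 * n ^ 4 + (-24:ℝ) * m * n ^ 6 + (-12:ℝ) * n ^ 7) * p ^ 0 * q ^ 3 + ((-4:ℝ) * m ^ 4 * n ^ 3 + (8:ℝ) * m ^ 3 * n ^ 4 + (-8:ℝ) * m * n ^ 6 + (4:ℝ) * n ^ 7) * p ^ 0 * q ^ 1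

noncomputable def LA3xc0 (m n e p q : ℝ) : ℝ :=
  ((-24:ℝ) * m ^ 7 * n ^ 3 + (76:ℝ) * m ^ 6 * n ^ 4 + (-40:ℝ) * m ^ 5 * n ^ 5 + (-100:ℝ) * m ^ 4 * n ^ 6 + (120:ℝ) * m ^ 3 * n ^ 7 + (4:ℝ) * m ^ 2 * n ^ 8 + (-56:ℝ) * m * n ^ 9 + (20:ℝ) * n ^ 10) * p ^ 6 * q ^ 5 + ((144:ℝ) * m ^ 7 * n ^ 3 + (72:ℝ) * m ^ 6 * n ^ 4 + (-432:ℝ) * m ^ 5 * n ^ 5 + (-216:ℝ) * m ^ 4 * n ^ 6 + (432:ℝ) * m ^ 3 * n ^ 7 + (216:ℝ) * m ^ 2 * n ^ 8 + (-144:ℝ) * m * n ^ 9 + (-72:ℝ) * n ^ 10) * p ^ 6 * q ^ 3 + ((-24:ℝ) * m ^ 7 * n ^ 3 + (-100:ℝ) * m ^ 6 * n ^ 4 + (-136:ℝ) * m ^ 5 * n ^ 5 + (-20:ℝ) * m ^ 4 * n ^ 6 + (120:ℝ) * m ^ 3 * n ^ 7 + (116:ℝ) * m ^ 2 * n ^ 8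 + (40:ℝ) * m * n ^ 9 + (4:ℝ) * n ^ 10) * p ^ 6 * q ^ 1 + ((-160:ℝ) * m ^ 8 * n ^ 2 * e + (-448:ℝ) * m ^ 7 * n ^ 3 * e + (864:ℝ) * m ^ 6 * n ^ 4 * e + (896:ℝ) * m ^ 5 * n ^ 5 * e + (-1120:ℝ) * m ^ 4 * n ^ 6 * e + (-576:ℝ) * m ^ 3 * n ^ 7 * e + (416:ℝ) * m ^ 2 * n ^ 8 * e + (128:ℝ) * m * n ^ 9 * e) * p ^ 5 * q ^ 4 + ((-160:ℝ) * m ^ 8 * n ^ 2 * e + (256:ℝ) * m ^ 7 * n ^ 3 * e + (1248:ℝ) * m ^ 6 * n ^ 4 * e + (448:ℝ) * m ^ 5 * n ^ 5 * e + (-1120:ℝ) * m ^ 4 * n ^ 6 * e + (-768:ℝ) * m ^ 3 * n ^ 7 * e + (32:ℝ) * m ^ 2 * n ^ 8 * e + (64:ℝ) * m * n ^ 9 * e) * p ^ 5 * q ^ 2 + ((256:ℝ) * m ^ 8 * n ^ 2 + (16:ℝ) * m ^ 7 * n ^ 3 + (-828:ℝ) * m ^ 6 * n ^ 4 + (-32:ℝ)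 * m ^ 5 * n ^ 5 + (916:ℝ) * m ^ 4 * n ^ 6 + (48:ℝ) * m ^ 3 * n ^ 7 + (-404:ℝ) * m ^ 2 * n ^ 8 + (-32:ℝ) * m * n ^ 9 + (60:ℝ) * n ^ 10) * p ^ 4 * q ^ 5 + ((-1024:ℝ) * m ^ 7 * n ^ 3 * e ^ 2 + (-224:ℝ) * m ^ 7 * n ^ 3 + (-768:ℝ) * m ^ 6 * n ^ 4 * e ^ 2 + (-168:ℝ) * m ^ 6 * n ^ 4 + (1024:ℝ) * m ^ 5 * n ^ 5 * e ^ 2 + (-352:ℝ) * m ^ 5 * n ^ 5 + (768:ℝ) * m ^ 4 * n ^ 6 * e ^ 2 + (-264:ℝ) * m ^ 4 * n ^ 6 + (864:ℝ) * m ^ 3 * n ^ 7 + (648:ℝ) * m ^ 2 * n ^ 8 + (-288:ℝ) * m * n ^ 9 + (-216:ℝ) * n ^ 10) * p ^ 4 * q ^ 3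

noncomputable def LA3xc1 (m n e p q : ℝ) : ℝ :=
  ((-256:ℝ) * m ^ 8 * n ^ 2 + (-368:ℝ) * m ^ 7 * n ^ 3 + (372:ℝ) * m ^ 6 * n ^ 4 + (640:ℝ) * m ^ 5 * n ^ 5 + (-124:ℝ) * m ^ 4 * n ^ 6 + (-336:ℝ) * m ^ 3 * n ^ 7 + (-4:ℝ) * m ^ 2 * n ^ 8 + (64:ℝ) * m * n ^ 9 + (12:ℝ) * n ^ 10) * p ^ 4 * q ^ 1 + ((576:ℝ) * m ^ 8 * n ^ 2 * e + (768:ℝ) * m ^ 7 * n ^ 3 * e + (-192:ℝ) * m ^ 6 * n ^ 4 * e + (-256:ℝ) * m ^ 5 * n ^ 5 * e + (-576:ℝ) * m ^ 4 * n ^ 6 * e + (-768:ℝ) * m ^ 3 * n ^ 7 * e + (192:ℝ) * m ^ 2 * n ^ 8 * e + (256:ℝ) * m * n ^ 9 * e) * p ^ 3 * q ^ 4 + ((576:ℝ) * m ^ 8 * n ^ 2 * e + (384:ℝ) * m ^ 7 * n ^ 3 * e + (-192:ℝ) * m ^ 6 * n ^ 4 * e + (-128:ℝ) * m ^ 5 *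 n ^ 5 * e + (-576:ℝ) * m ^ 4 * n ^ 6 * e + (-384:ℝ) * m ^ 3 * n ^ 7 * e + (192:ℝ) * m ^ 2 * n ^ 8 * e + (128:ℝ) * m * n ^ 9 * e) * p ^ 3 * q ^ 2 + ((-128:ℝ) * m ^ 8 * n ^ 2 + (-472:ℝ) * m ^ 7 * n ^ 3 + (-156:ℝ) * m ^ 6 * n ^ 4 + (824:ℝ) * m ^ 5 * n ^ 5 + (532:ℝ) * m ^ 4 * n ^ 6 + (-456:ℝ) * m ^ 3 * n ^ 7 + (-308:ℝ) * m ^ 2 * n ^ 8 + (104:ℝ) * m * n ^ 9 + (60:ℝ) * n ^ 10) * p ^ 2 * q ^ 5 + ((-512:ℝ) * m ^ 7 * n ^ 3 * e ^ 2 + (-112:ℝ) * m ^ 7 * n ^ 3 + (-768:ℝ) * m ^ 6 * n ^ 4 * e ^ 2 + (-168:ℝ) * m ^ 6 * n ^ 4 + (512:ℝ) * m ^ 5 * n ^ 5 * e ^ 2 + (-176:ℝ) * m ^ 5 * n ^ 5 + (768:ℝ) * m ^ 4 * n ^ 6 * e ^ 2 + (-264:ℝ) * m ^ 4 * n ^ 6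 + (432:ℝ) * m ^ 3 * n ^ 7 + (648:ℝ) * m ^ 2 * n ^ 8 + (-144:ℝ) * m * n ^ 9 + (-216:ℝ) * n ^ 10) * p ^ 2 * q ^ 3 + ((128:ℝ) * m ^ 8 * n ^ 2 + (-88:ℝ) * m ^ 7 * n ^ 3 + (-300:ℝ) * m ^ 6 * n ^ 4 + (152:ℝ) * m ^ 5 * n ^ 5 + (260:ℝ) * m ^ 4 * n ^ 6 + (-72:ℝ) * m ^ 3 * n ^ 7 + (-100:ℝ) * m ^ 2 * n ^ 8 + (8:ℝ) * m * n ^ 9 + (12:ℝ) * n ^ 10) * p ^ 2 * q ^ 1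

noncomputable def LA3xc2 (m n e p q : ℝ) : ℝ :=
  ((-32:ℝ) * m ^ 8 * n ^ 2 * e + (-64:ℝ) * m ^ 7 * n ^ 3 * e + (480:ℝ) * m ^ 6 * n ^ 4 * e + (896:ℝ) * m ^ 5 * n ^ 5 * e + (-224:ℝ) * m ^ 4 * n ^ 6 * e + (-960:ℝ) * m ^ 3 * n ^ 7 * e + (-224:ℝ) * m ^ 2 * n ^ 8 * e + (128:ℝ) * m * n ^ 9 * e) * p ^ 1 * q ^ 4 + ((-32:ℝ) * m ^ 8 * n ^ 2 * e + (-128:ℝ) * m ^ 7 * n ^ 3 * e + (96:ℝ) * m ^ 6 * n ^ 4 * e + (448:ℝ) * m ^ 5 * n ^ 5 * e + (-224:ℝ) * m ^ 4 * n ^ 6 * e + (-384:ℝ) * m ^ 3 * n ^ 7 * e + (160:ℝ) * m ^ 2 * n ^ 8 * e + (64:ℝ) * m * n ^ 9 * e) * p ^ 1 * q ^ 2 + ((-20:ℝ) * m ^ 6 * n ^ 4 + (-80:ℝ) * m ^ 5 * n ^ 5 + (-100:ℝ) * m ^ 4 * n ^ 6 + (100:ℝ) * m ^ 2 * n ^ 8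 + (80:ℝ) * m * n ^ 9 + (20:ℝ) * n ^ 10) * p ^ 0 * q ^ 5 + ((72:ℝ) * m ^ 6 * n ^ 4 + (-216:ℝ) * m ^ 4 * n ^ 6 + (216:ℝ) * m ^ 2 * n ^ 8 + (-72:ℝ) * n ^ 10) * p ^ 0 * q ^ 3 + ((-4:ℝ) * m ^ 6 * n ^ 4 + (16:ℝ) * m ^ 5 * n ^ 5 + (-20:ℝ) * m ^ 4 * n ^ 6 + (20:ℝ) * m ^ 2 * n ^ 8 + (-16:ℝ) * m * n ^ 9 + (4:ℝ) * n ^ 10) * p ^ 0 * q ^ 1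

noncomputable def LA3x (m n e p q : ℝ) : ℝ :=
  LA3xc0 m n e p q + LA3xc1 m n e p q + LA3xc2 m n e p q

lemma Dd_comm (m n e p q : ℝ) : Dd n m e q p = Dd m n e p q := by
  simp only [Dd]; ring

lemma step1x (m n e : ℝ) (X Y : ℝ → ℝ) (x : ℝ)
    (hX : HasDerivAt X (m * X x) x) (hY : HasDerivAt Y (n * Y x) x)
    (hD : Dd m n e (X x) (Y x) ≠ 0) :
    HasDerivAt (fun z => N1d m n e (X z) (Y z) / Dd m n e (X z) (Y z))
      (A2s m n e (X x) (Y x) / Dd m n e (X x) (Y x) ^ 2) x := by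
  have hP : HasDerivAt (fun z => N1d m n e (X z) (Y z)) (LN1x m n e (X x) (Y x)) x := by
    simp only [N1d]
    have hch := ((hmono' hX hY ((-4:ℝ) * m ^ 2 * n + (4:ℝ) * n ^ 3) 2 1)).add
      (hmono' hX hY ((-4:ℝ) * m ^ 2 * n + (4:ℝ) * n ^ 3) 0 1)
    exact HDA_congr hch (by simp only [LN1x]; push_cast; ring)
  have hDD : HasDerivAt (fun z => Dd m n e (X z) (Y z)) (LDx m n e (X x) (Y x)) x := by
    simp only [Dd]
    have hch := (((((hmono' hX hY ((1:ℝ) * m ^ 2 + (-2:ℝ) * m * n + (1:ℝ) * n ^ 2) 2 2)).add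
      (hmono' hX hY ((1:ℝ) * m ^ 2 + (2:ℝ) * m * n + (1:ℝ) * n ^ 2) 2 0)).add
      (hmono' hX hY ((-8:ℝ) * m * n * e) 1 1)).add
      (hmono' hX hY ((1:ℝ) * m ^ 2 + (2:ℝ) * m * n + (1:ℝ) * n ^ 2) 0 2)).add
      (hmono' hX hY ((1:ℝ) * m ^ 2 + (-2:ℝ) * m * n + (1:ℝ) * n ^ 2) 0 0)
    exact HDA_congr hch (by simp only [LDx]; push_cast; ring)
  have key : A2s m n e (X x) (Y x) = LN1x m n e (X x) (Y x) * Dd m n e (X x) (Y x)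
      - (1:ℝ) * N1d m n e (X x) (Y x) * LDx m n e (X x) (Y x) := by
    simp only [A2s, LN1x, N1d, Dd, LDx]; ring
  have h := hP.div hDD hD
  refine HDA_congr h ?_
  rw [div_eq_div_iff (pow_ne_zero _ hD) (pow_ne_zero _ hD)]
  linear_combination (Dd m n e (X x) (Y x) ^ 2) * key

lemma step1t (m n e : ℝ) (X Y : ℝ → ℝ) (x : ℝ)
    (hX : HasDerivAt X ((-(m^3)) * X x) x) (hY : HasDerivAt Y ((-(n^3)) * Y x) x)
    (hD : Dd m n e (X x) (Y x) ≠ 0) :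
    HasDerivAt (fun z => N1d m n e (X z) (Y z) / Dd m n e (X z) (Y z))
      (B2s m n e (X x) (Y x) / Dd m n e (X x) (Y x) ^ 2) x := by
  have hP : HasDerivAt (fun z => N1d m n e (X z) (Y z)) (LN1t m n e (X x) (Y x)) x := by
    simp only [N1d]
    have hch := ((hmono' hX hY ((-4:ℝ) * m ^ 2 * n + (4:ℝ) * n ^ 3) 2 1)).add
      (hmono' hX hY ((-4:ℝ) * m ^ 2 * n + (4:ℝ) * n ^ 3) 0 1)
    exact HDA_congr hch (by simp only [LN1t]; push_cast; ring)
  have hDD : HasDerivAt (fun z => Dd m n e (X z) (Y z)) (LDt m n e (X x) (Y x)) x := by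
    simp only [Dd]
    have hch := (((((hmono' hX hY ((1:ℝ) * m ^ 2 + (-2:ℝ) * m * n + (1:ℝ) * n ^ 2) 2 2)).add
      (hmono' hX hY ((1:ℝ) * m ^ 2 + (2:ℝ) * m * n + (1:ℝ) * n ^ 2) 2 0)).add
      (hmono' hX hY ((-8:ℝ) * m * n * e) 1 1)).add
      (hmono' hX hY ((1:ℝ) * m ^ 2 + (2:ℝ) * m * n + (1:ℝ) * n ^ 2) 0 2)).add
      (hmono' hX hY ((1:ℝ) * m ^ 2 + (-2:ℝ) * m * n + (1:ℝ) * n ^ 2) 0 0)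
    exact HDA_congr hch (by simp only [LDt]; push_cast; ring)
  have key : B2s m n e (X x) (Y x) = LN1t m n e (X x) (Y x) * Dd m n e (X x) (Y x)
      - (1:ℝ) * N1d m n e (X x) (Y x) * LDt m n e (X x) (Y x) := by
    simp only [B2s, LN1t, N1d, Dd, LDt]; ring
  have h := hP.div hDD hD
  refine HDA_congr h ?_
  rw [div_eq_div_iff (pow_ne_zero _ hD) (pow_ne_zero _ hD)]
  linear_combination (Dd m n e (X x) (Y x) ^ 2) * key

lemma step2x (m n e : ℝ) (X Y : ℝ → ℝ) (x : ℝ)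
    (hX : HasDerivAt X (m * X x) x) (hY : HasDerivAt Y (n * Y x) x)
    (hD : Dd m n e (X x) (Y x) ≠ 0) :
    HasDerivAt (fun z => A2s m n e (X z) (Y z) / Dd m n e (X z) (Y z) ^ 2)
      (A3s m n e (X x) (Y x) / Dd m n e (X x) (Y x) ^ 3) x := by
  have hP : HasDerivAt (fun z => A2s m n e (X z) (Y z)) (LA2x m n e (X x) (Y x)) x := by
    simp only [A2s]
    have hch := ((((((((hmono' hX hY ((4:ℝ) * m ^ 4 * n ^ 2 + (-8:ℝ) * m ^ 3 * n ^ 3 + (8:ℝ) * m * n ^ 5 + (-4:ℝ) * n ^ 6) 4 3)).add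
      (hmono' hX hY ((-4:ℝ) * m ^ 4 * n ^ 2 + (-8:ℝ) * m ^ 3 * n ^ 3 + (8:ℝ) * m * n ^ 5 + (4:ℝ) * n ^ 6) 4 1)).add
      (hmono' hX hY ((32:ℝ) * m ^ 4 * n ^ 2 * e + (-32:ℝ) * m ^ 2 * n ^ 4 * e) 3 2)).add
      (hmono' hX hY ((-24:ℝ) * m ^ 4 * n ^ 2 + (32:ℝ) * m ^ 2 * n ^ 4 + (-8:ℝ) * n ^ 6) 2 3)).add
      (hmono' hX hY ((24:ℝ) * m ^ 4 * n ^ 2 + (-32:ℝ) * m ^ 2 * n ^ 4 + (8:ℝ) * n ^ 6) 2 1)).add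
      (hmono' hX hY ((-32:ℝ) * m ^ 4 * n ^ 2 * e + (32:ℝ) * m ^ 2 * n ^ 4 * e) 1 2)).add
      (hmono' hX hY ((4:ℝ) * m ^ 4 * n ^ 2 + (8:ℝ) * m ^ 3 * n ^ 3 + (-8:ℝ) * m * n ^ 5 + (-4:ℝ) * n ^ 6) 0 3)).add
      (hmono' hX hY ((-4:ℝ) * m ^ 4 * n ^ 2 + (8:ℝ) * m ^ 3 * n ^ 3 + (-8:ℝ) * m * n ^ 5 + (4:ℝ) * n ^ 6) 0 1)
    exact HDA_congr hch (by simp only [LA2x]; push_cast; ring)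
  have hDD : HasDerivAt (fun z => Dd m n e (X z) (Y z)) (LDx m n e (X x) (Y x)) x := by
    simp only [Dd]
    have hch := (((((hmono' hX hY ((1:ℝ) * m ^ 2 + (-2:ℝ) * m * n + (1:ℝ) * n ^ 2) 2 2)).add
      (hmono' hX hY ((1:ℝ) * m ^ 2 + (2:ℝ) * m * n + (1:ℝ) * n ^ 2) 2 0)).add
      (hmono' hX hY ((-8:ℝ) * m * n * e) 1 1)).add
      (hmono' hX hY ((1:ℝ) * m ^ 2 + (2:ℝ) * m * n + (1:ℝ) * n ^ 2) 0 2)).add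
      (hmono' hX hY ((1:ℝ) * m ^ 2 + (-2:ℝ) * m * n + (1:ℝ) * n ^ 2) 0 0)
    exact HDA_congr hch (by simp only [LDx]; push_cast; ring)
  have key : A3s m n e (X x) (Y x) = LA2x m n e (X x) (Y x) * Dd m n e (X x) (Y x)
      - (2:ℝ) * A2s m n e (X x) (Y x) * LDx m n e (X x) (Y x) := by
    simp only [A3sc0, A3sc1, A3s, LA2x, A2s, Dd, LDx]; ring
  have h := hP.div (hDD.pow 2) (pow_ne_zero _ hD)
  refine HDA_congr h ?_
  simp only [Pi.pow_apply]
  rw [div_eq_div_iff (pow_ne_zero _ hD) (pow_ne_zero _ (pow_ne_zero _ hD))]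
  push_cast
  norm_num
  linear_combination (Dd m n e (X x) (Y x) ^ 4) * key

lemma step3x (m n e : ℝ) (X Y : ℝ → ℝ) (x : ℝ)
    (hX : HasDerivAt X (m * X x) x) (hY : HasDerivAt Y (n * Y x) x)
    (hD : Dd m n e (X x) (Y x) ≠ 0) :
    HasDerivAt (fun z => A3s m n e (X z) (Y z) / Dd m n e (X z) (Y z) ^ 3)
      (A4s m n e (X x) (Y x) / Dd m n e (X x) (Y x) ^ 4) x := by
  have hP : HasDerivAt (fun z => A3s m n e (X z) (Y z)) (LA3x m n e (X x) (Y x)) x := by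
    simp only [A3sc0, A3sc1, A3s]
    have hch := (((((((((((hmono' hX hY ((-4:ℝ) * m ^ 6 * n ^ 3 + (16:ℝ) * m ^ 5 * n ^ 4 + (-20:ℝ) * m ^ 4 * n ^ 5 + (20:ℝ) * m ^ 2 * n ^ 7 + (-16:ℝ) * m * n ^ 8 + (4:ℝ) * n ^ 9) 6 5)).add
      (hmono' hX hY ((24:ℝ) * m ^ 6 * n ^ 3 + (-72:ℝ) * m ^ 4 * n ^ 5 + (72:ℝ) * m ^ 2 * n ^ 7 + (-24:ℝ) * n ^ 9) 6 3)).add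
      (hmono' hX hY ((-4:ℝ) * m ^ 6 * n ^ 3 + (-16:ℝ) * m ^ 5 * n ^ 4 + (-20:ℝ) * m ^ 4 * n ^ 5 + (20:ℝ) * m ^ 2 * n ^ 7 + (16:ℝ) * m * n ^ 8 + (4:ℝ) * n ^ 9) 6 1)).add
      (hmono' hX hY ((-32:ℝ) * m ^ 7 * n ^ 2 * e + (-64:ℝ) * m ^ 6 * n ^ 3 * e + (224:ℝ) * m ^ 5 * n ^ 4 * e + (-224:ℝ) * m ^ 3 * n ^ 6 * e + (64:ℝ) * m ^ 2 * n ^ 7 * e + (32:ℝ) * m * n ^ 8 * e) 5 4)).add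
      (hmono' hX hY ((-32:ℝ) * m ^ 7 * n ^ 2 * e + (64:ℝ) * m ^ 6 * n ^ 3 * e + (224:ℝ) * m ^ 5 * n ^ 4 * e + (-224:ℝ) * m ^ 3 * n ^ 6 * e + (-64:ℝ) * m ^ 2 * n ^ 7 * e + (32:ℝ) * m * n ^ 8 * e) 5 2)).add
      (hmono' hX hY ((64:ℝ) * m ^ 7 * n ^ 2 + (-76:ℝ) * m ^ 6 * n ^ 3 + (-112:ℝ) * m ^ 5 * n ^ 4 + (132:ℝ) * m ^ 4 * n ^ 5 + (64:ℝ) * m ^ 3 * n ^ 6 + (-68:ℝ) * m ^ 2 * n ^ 7 + (-16:ℝ) * m * n ^ 8 + (12:ℝ) * n ^ 9) 4 5)).add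
      (hmono' hX hY ((-256:ℝ) * m ^ 6 * n ^ 3 * e ^ 2 + (-56:ℝ) * m ^ 6 * n ^ 3 + (256:ℝ) * m ^ 4 * n ^ 5 * e ^ 2 + (-88:ℝ) * m ^ 4 * n ^ 5 + (216:ℝ) * m ^ 2 * n ^ 7 + (-72:ℝ) * n ^ 9) 4 3)).add
      (hmono' hX hY ((-64:ℝ) * m ^ 7 * n ^ 2 + (-76:ℝ) * m ^ 6 * n ^ 3 + (112:ℝ) * m ^ 5 * n ^ 4 + (132:ℝ) * m ^ 4 * n ^ 5 + (-64:ℝ) * m ^ 3 * n ^ 6 + (-68:ℝ) * m ^ 2 * n ^ 7 + (16:ℝ) * m * n ^ 8 + (12:ℝ) * n ^ 9) 4 1)).add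
      (hmono' hX hY ((192:ℝ) * m ^ 7 * n ^ 2 * e + (-64:ℝ) * m ^ 5 * n ^ 4 * e + (-192:ℝ) * m ^ 3 * n ^ 6 * e + (64:ℝ) * m * n ^ 8 * e) 3 4)).add
      (hmono' hX hY ((192:ℝ) * m ^ 7 * n ^ 2 * e + (-64:ℝ) * m ^ 5 * n ^ 4 * e + (-192:ℝ) * m ^ 3 * n ^ 6 * e + (64:ℝ) * m * n ^ 8 * e) 3 2)).add
      ((((((((((hmono' hX hY ((-64:ℝ) * m ^ 7 * n ^ 2 + (-76:ℝ) * m ^ 6 * n ^ 3 + (112:ℝ) * m ^ 5 * n ^ 4 + (132:ℝ) * m ^ 4 * n ^ 5 + (-64:ℝ) * m ^ 3 * n ^ 6 + (-68:ℝ) * m ^ 2 * n ^ 7 + (16:ℝ) * m * n ^ 8 + (12:ℝ) * n ^ 9) 2 5)).add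
      (hmono' hX hY ((-256:ℝ) * m ^ 6 * n ^ 3 * e ^ 2 + (-56:ℝ) * m ^ 6 * n ^ 3 + (256:ℝ) * m ^ 4 * n ^ 5 * e ^ 2 + (-88:ℝ) * m ^ 4 * n ^ 5 + (216:ℝ) * m ^ 2 * n ^ 7 + (-72:ℝ) * n ^ 9) 2 3)).add
      (hmono' hX hY ((64:ℝ) * m ^ 7 * n ^ 2 + (-76:ℝ) * m ^ 6 * n ^ 3 + (-112:ℝ) * m ^ 5 * n ^ 4 + (132:ℝ) * m ^ 4 * n ^ 5 + (64:ℝ) * m ^ 3 * n ^ 6 + (-68:ℝ) * m ^ 2 * n ^ 7 + (-16:ℝ) * m * n ^ 8 + (12:ℝ) * n ^ 9) 2 1)).add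
      (hmono' hX hY ((-32:ℝ) * m ^ 7 * n ^ 2 * e + (64:ℝ) * m ^ 6 * n ^ 3 * e + (224:ℝ) * m ^ 5 * n ^ 4 * e + (-224:ℝ) * m ^ 3 * n ^ 6 * e + (-64:ℝ) * m ^ 2 * n ^ 7 * e + (32:ℝ) * m * n ^ 8 * e) 1 4)).add
      (hmono' hX hY ((-32:ℝ) * m ^ 7 * n ^ 2 * e + (-64:ℝ) * m ^ 6 * n ^ 3 * e + (224:ℝ) * m ^ 5 * n ^ 4 * e + (-224:ℝ) * m ^ 3 * n ^ 6 * e + (64:ℝ) * m ^ 2 * n ^ 7 * e + (32:ℝ) * m * n ^ 8 * e) 1 2)).add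
      (hmono' hX hY ((-4:ℝ) * m ^ 6 * n ^ 3 + (-16:ℝ) * m ^ 5 * n ^ 4 + (-20:ℝ) * m ^ 4 * n ^ 5 + (20:ℝ) * m ^ 2 * n ^ 7 + (16:ℝ) * m * n ^ 8 + (4:ℝ) * n ^ 9) 0 5)).add
      (hmono' hX hY ((24:ℝ) * m ^ 6 * n ^ 3 + (-72:ℝ) * m ^ 4 * n ^ 5 + (72:ℝ) * m ^ 2 * n ^ 7 + (-24:ℝ) * n ^ 9) 0 3)).add
      (hmono' hX hY ((-4:ℝ) * m ^ 6 * n ^ 3 + (16:ℝ) * m ^ 5 * n ^ 4 + (-20:ℝ) * m ^ 4 * n ^ 5 + (20:ℝ) * m ^ 2 * n ^ 7 + (-16:ℝ) * m * n ^ 8 + (4:ℝ) * n ^ 9) 0 1)))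
    exact HDA_congr hch (by simp only [LA3xc0, LA3xc1, LA3xc2, LA3x]; push_cast; ring)
  have hDD : HasDerivAt (fun z => Dd m n e (X z) (Y z)) (LDx m n e (X x) (Y x)) x := by
    simp only [Dd]
    have hch := (((((hmono' hX hY ((1:ℝ) * m ^ 2 + (-2:ℝ) * m * n + (1:ℝ) * n ^ 2) 2 2)).add
      (hmono' hX hY ((1:ℝ) * m ^ 2 + (2:ℝ) * m * n + (1:ℝ) * n ^ 2) 2 0)).add
      (hmono' hX hY ((-8:ℝ) * m * n * e) 1 1)).add
      (hmono' hX hY ((1:ℝ) * m ^ 2 + (2:ℝ) * m * n + (1:ℝ) * n ^ 2) 0 2)).add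
      (hmono' hX hY ((1:ℝ) * m ^ 2 + (-2:ℝ) * m * n + (1:ℝ) * n ^ 2) 0 0)
    exact HDA_congr hch (by simp only [LDx]; push_cast; ring)
  have key : A4s m n e (X x) (Y x) = LA3x m n e (X x) (Y x) * Dd m n e (X x) (Y x)
      - (3:ℝ) * A3s m n e (X x) (Y x) * LDx m n e (X x) (Y x) := by
    simp only [A4sc0, A4sc1, A4sc2, A4sc3, A4sc4, A4sc5, A4s, LA3xc0, LA3xc1, LA3xc2, LA3x, A3sc0, A3sc1, A3s, Dd, LDx]; ring
  have h := hP.div (hDD.pow 3) (pow_ne_zero _ hD)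
  refine HDA_congr h ?_
  simp only [Pi.pow_apply]
  rw [div_eq_div_iff (pow_ne_zero _ hD) (pow_ne_zero _ (pow_ne_zero _ hD))]
  push_cast
  norm_num
  linear_combination (Dd m n e (X x) (Y x) ^ 6) * key

lemma pde_id (m n e p q : ℝ) (hD : Dd m n e p q ≠ 0) :
    B2s m n e p q / Dd m n e p q ^ 2
      + 3 / 2 * ((N1d m n e p q / Dd m n e p q) ^ 2 + (N1d n m e q p / Dd m n e p q) ^ 2
          + 2 * e * (N1d m n e p q / Dd m n e p q) * (N1d n m e q p / Dd m n e p q))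
        * (A2s m n e p q / Dd m n e p q ^ 2)
      + A4s m n e p q / Dd m n e p q ^ 4 = 0 := by
  have key : B2s m n e p q * Dd m n e p q ^ 2
      + 3 / 2 * ((N1d m n e p q) ^ 2 + (N1d n m e q p) ^ 2
          + 2 * e * N1d m n e p q * N1d n m e q p) * A2s m n e p q
      + A4s m n e p q = 0 := by
    simp only [B2s, Dd, N1d, A2s, A4sc0, A4sc1, A4sc2, A4sc3, A4sc4, A4sc5, A4s]; ring
  have h4 : Dd m n e p q ^ 4 ≠ 0 := pow_ne_zero _ hD
  have expand : B2s m n e p q / Dd m n e p q ^ 2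
      + 3 / 2 * ((N1d m n e p q / Dd m n e p q) ^ 2 + (N1d n m e q p / Dd m n e p q) ^ 2
          + 2 * e * (N1d m n e p q / Dd m n e p q) * (N1d n m e q p / Dd m n e p q))
        * (A2s m n e p q / Dd m n e p q ^ 2)
      + A4s m n e p q / Dd m n e p q ^ 4
      = (B2s m n e p q * Dd m n e p q ^ 2
      + 3 / 2 * ((N1d m n e p q) ^ 2 + (N1d n m e q p) ^ 2
          + 2 * e * N1d m n e p q * N1d n m e q p) * A2s m n e p q
      + A4s m n e p q) / Dd m n e p q ^ 4 := by
    field_simp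
  rw [expand, key, zero_div]

noncomputable def XV (m c : ℝ) : ℝ → ℝ → ℝ := fun x t => Real.exp (m * (x - c) - m ^ 3 * t)

lemma XV_x (m c : ℝ) (x t : ℝ) : HasDerivAt (fun z => XV m c z t) (m * XV m c x t) x := by
  have h1 : HasDerivAt (fun z : ℝ => m * (z - c) - m ^ 3 * t) m x := by
    simpa using (((hasDerivAt_id x).sub_const c).const_mul m).sub_const (m ^ 3 * t)
  exact HDA_congr h1.exp (mul_comm _ _)

lemma XV_t (m c : ℝ) (x t : ℝ) : HasDerivAt (fun s => XV m c x s) (-(m ^ 3) * XV m c x t) t := by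
  have h1 : HasDerivAt (fun s : ℝ => m * (x - c) - m ^ 3 * s) (-(m ^ 3)) t := by
    simpa using ((hasDerivAt_id t).const_mul (m ^ 3)).const_sub (m * (x - c))
  exact HDA_congr h1.exp (mul_comm _ _)

noncomputable def F0 (m n e c1 c2 : ℝ) (x t : ℝ) : ℝ :=
  N1d m n e (XV m c1 x t) (XV n c2 x t) / Dd m n e (XV m c1 x t) (XV n c2 x t)

noncomputable def F1 (m n e c1 c2 : ℝ) (x t : ℝ) : ℝ :=
  A2s m n e (XV m c1 x t) (XV n c2 x t) / Dd m n e (XV m c1 x t) (XV n c2 x t) ^ 2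

noncomputable def FT (m n e c1 c2 : ℝ) (x t : ℝ) : ℝ :=
  B2s m n e (XV m c1 x t) (XV n c2 x t) / Dd m n e (XV m c1 x t) (XV n c2 x t) ^ 2

noncomputable def F2 (m n e c1 c2 : ℝ) (x t : ℝ) : ℝ :=
  A3s m n e (XV m c1 x t) (XV n c2 x t) / Dd m n e (XV m c1 x t) (XV n c2 x t) ^ 3

noncomputable def F3 (m n e c1 c2 : ℝ) (x t : ℝ) : ℝ :=
  A4s m n e (XV m c1 x t) (XV n c2 x t) / Dd m n e (XV m c1 x t) (XV n c2 x t) ^ 4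

lemma F0_x (m n e c1 c2 x t : ℝ) (hD : Dd m n e (XV m c1 x t) (XV n c2 x t) ≠ 0) :
    HasDerivAt (fun z => F0 m n e c1 c2 z t) (F1 m n e c1 c2 x t) x :=
  step1x m n e (fun z => XV m c1 z t) (fun z => XV n c2 z t) x (XV_x m c1 x t) (XV_x n c2 x t) hD

lemma F0_t (m n e c1 c2 x t : ℝ) (hD : Dd m n e (XV m c1 x t) (XV n c2 x t) ≠ 0) :
    HasDerivAt (fun s => F0 m n e c1 c2 x s) (FT m n e c1 c2 x t) t :=
  step1t m n e (fun s => XV m c1 x s) (fun s => XV n c2 x s) t (XV_t m c1 x t) (XV_t n c2 x t) hD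

lemma F1_x (m n e c1 c2 x t : ℝ) (hD : Dd m n e (XV m c1 x t) (XV n c2 x t) ≠ 0) :
    HasDerivAt (fun z => F1 m n e c1 c2 z t) (F2 m n e c1 c2 x t) x :=
  step2x m n e (fun z => XV m c1 z t) (fun z => XV n c2 z t) x (XV_x m c1 x t) (XV_x n c2 x t) hD

lemma F2_x (m n e c1 c2 x t : ℝ) (hD : Dd m n e (XV m c1 x t) (XV n c2 x t) ≠ 0) :
    HasDerivAt (fun z => F2 m n e c1 c2 z t) (F3 m n e c1 c2 x t) x :=
  step3x m n e (fun z => XV m c1 z t) (fun z => XV n c2 z t) x (XV_x m c1 x t) (XV_x n c2 x t) hD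

lemma Fpde (m n e c1 c2 x t : ℝ) (hD : Dd m n e (XV m c1 x t) (XV n c2 x t) ≠ 0) :
    FT m n e c1 c2 x t
      + 3 / 2 * (F0 m n e c1 c2 x t ^ 2 + F0 n m e c2 c1 x t ^ 2
          + 2 * e * F0 m n e c1 c2 x t * F0 n m e c2 c1 x t) * F1 m n e c1 c2 x t
      + F3 m n e c1 c2 x t = 0 := by
  have h := pde_id m n e (XV m c1 x t) (XV n c2 x t) hD
  simp only [FT, F0, F1, F3]
  rw [Dd_comm m n e (XV m c1 x t) (XV n c2 x t)]
  linear_combination h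
theorem vmkdv_two_soliton (E₁ E₂ : EuclideanSpace ℝ (Fin 2))
    (hE₁ : ‖E₁‖ = 1) (hE₂ : ‖E₂‖ = 1)
    (μ ν cμ cν : ℝ) (hμν : μ ≠ ν) (hμν' : μ ≠ -ν)
    (ξμ ξν Fμν Fνμ G : ℝ → ℝ → ℝ)
    (hξμ : ∀ x t : ℝ, ξμ x t = μ * (x - cμ) - μ ^ 3 * t)
    (hξν : ∀ x t : ℝ, ξν x t = ν * (x - cν) - ν ^ 3 * t)
    (hFμν : ∀ x t : ℝ, Fμν x t = 2 * (ν ^ 2 - μ ^ 2) * ν * Real.cosh (ξμ x t))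
    (hFνμ : ∀ x t : ℝ, Fνμ x t = 2 * (μ ^ 2 - ν ^ 2) * μ * Real.cosh (ξν x t))
    (hG : ∀ x t : ℝ,
      G x t = (μ ^ 2 + ν ^ 2) * Real.cosh (ξμ x t) * Real.cosh (ξν x t)
        - 2 * μ * ν * Real.sinh (ξμ x t) * Real.sinh (ξν x t)
        - 2 * μ * ν * ⟪E₁, E₂⟫_ℝ)
    (hG0 : ∀ x t : ℝ, G x t ≠ 0)
    (u : ℝ → ℝ → EuclideanSpace ℝ (Fin 2))
    (hu : ∀ x t : ℝ, u x t = (Fμν x t / G x t) • E₁ + (Fνμ x t / G x t) • E₂) :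
    ContDiff ℝ ∞ (Function.uncurry u) ∧ IsVmKdV u := by
  have hDG : ∀ x t : ℝ, Dd μ ν ⟪E₁, E₂⟫_ℝ (XV μ cμ x t) (XV ν cν x t)
      = (4 * XV μ cμ x t * XV ν cν x t) * G x t := by
    intro x t
    rw [hG x t]
    simp only [Dd, XV, Real.cosh_eq, Real.sinh_eq, Real.exp_neg, hξμ, hξν]
    field_simp
    ring
  have hD1 : ∀ x t : ℝ, Dd μ ν ⟪E₁, E₂⟫_ℝ (XV μ cμ x t) (XV ν cν x t) ≠ 0 := by
    intro x t
    rw [hDG x t]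
    have h4 : (4 : ℝ) * XV μ cμ x t * XV ν cν x t ≠ 0 := by
      simp only [XV]; positivity
    exact mul_ne_zero h4 (hG0 x t)
  have hD2 : ∀ x t : ℝ, Dd ν μ ⟪E₁, E₂⟫_ℝ (XV ν cν x t) (XV μ cμ x t) ≠ 0 := by
    intro x t; rw [Dd_comm]; exact hD1 x t
  have he1 : ∀ x t : ℝ, Fμν x t / G x t = F0 μ ν ⟪E₁, E₂⟫_ℝ cμ cν x t := by
    intro x t
    simp only [F0]
    rw [div_eq_div_iff (hG0 x t) (hD1 x t), hDG x t, hFμν x t]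
    simp only [N1d, XV, Real.cosh_eq, Real.sinh_eq, Real.exp_neg, hξμ, hξν]
    field_simp
    ring
  have he2 : ∀ x t : ℝ, Fνμ x t / G x t = F0 ν μ ⟪E₁, E₂⟫_ℝ cν cμ x t := by
    intro x t
    simp only [F0]
    rw [div_eq_div_iff (hG0 x t) (hD2 x t), Dd_comm, hDG x t, hFνμ x t]
    simp only [N1d, XV, Real.cosh_eq, Real.sinh_eq, Real.exp_neg, hξμ, hξν]
    field_simp
    ring
  have hu' : ∀ x t : ℝ, u x t = F0 μ ν ⟪E₁, E₂⟫_ℝ cμ cν x t • E₁ + F0 ν μ ⟪E₁, E₂⟫_ℝ cν cμ x t • E₂ := by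
    intro x t; rw [hu x t, he1 x t, he2 x t]
  have hux : ∀ x t : ℝ, HasDerivAt (fun z => u z t) (F1 μ ν ⟪E₁, E₂⟫_ℝ cμ cν x t • E₁ + F1 ν μ ⟪E₁, E₂⟫_ℝ cν cμ x t • E₂) x := by
    intro x t
    have hfn : (fun z => u z t) = fun z => F0 μ ν ⟪E₁, E₂⟫_ℝ cμ cν z t • E₁ + F0 ν μ ⟪E₁, E₂⟫_ℝ cν cμ z t • E₂ :=
      funext fun z => hu' z t
    rw [hfn]
    exact ((F0_x μ ν ⟪E₁, E₂⟫_ℝ cμ cν x t (hD1 x t)).smul_const E₁).add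
      ((F0_x ν μ ⟪E₁, E₂⟫_ℝ cν cμ x t (hD2 x t)).smul_const E₂)
  have hpdx : ∀ x t : ℝ, pdx u x t = F1 μ ν ⟪E₁, E₂⟫_ℝ cμ cν x t • E₁ + F1 ν μ ⟪E₁, E₂⟫_ℝ cν cμ x t • E₂ :=
    fun x t => (hux x t).deriv
  have huxx : ∀ x t : ℝ, HasDerivAt (fun z => pdx u z t) (F2 μ ν ⟪E₁, E₂⟫_ℝ cμ cν x t • E₁ + F2 ν μ ⟪E₁, E₂⟫_ℝ cν cμ x t • E₂) x := by
    intro x t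
    have hfn : (fun z => pdx u z t) = fun z => F1 μ ν ⟪E₁, E₂⟫_ℝ cμ cν z t • E₁ + F1 ν μ ⟪E₁, E₂⟫_ℝ cν cμ z t • E₂ :=
      funext fun z => hpdx z t
    rw [hfn]
    exact ((F1_x μ ν ⟪E₁, E₂⟫_ℝ cμ cν x t (hD1 x t)).smul_const E₁).add
      ((F1_x ν μ ⟪E₁, E₂⟫_ℝ cν cμ x t (hD2 x t)).smul_const E₂)
  have hpdxx : ∀ x t : ℝ, pdx (pdx u) x t = F2 μ ν ⟪E₁, E₂⟫_ℝ cμ cν x t • E₁ + F2 ν μ ⟪E₁, E₂⟫_ℝ cν cμ x t • E₂ :=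
    fun x t => (huxx x t).deriv
  have huxxx : ∀ x t : ℝ, HasDerivAt (fun z => pdx (pdx u) z t) (F3 μ ν ⟪E₁, E₂⟫_ℝ cμ cν x t • E₁ + F3 ν μ ⟪E₁, E₂⟫_ℝ cν cμ x t • E₂) x := by
    intro x t
    have hfn : (fun z => pdx (pdx u) z t) = fun z => F2 μ ν ⟪E₁, E₂⟫_ℝ cμ cν z t • E₁ + F2 ν μ ⟪E₁, E₂⟫_ℝ cν cμ z t • E₂ :=
      funext fun z => hpdxx z t
    rw [hfn]
    exact ((F2_x μ ν ⟪E₁, E₂⟫_ℝ cμ cν x t (hD1 x t)).smul_const E₁).add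
      ((F2_x ν μ ⟪E₁, E₂⟫_ℝ cν cμ x t (hD2 x t)).smul_const E₂)
  have hpdxxx : ∀ x t : ℝ, pdx (pdx (pdx u)) x t = F3 μ ν ⟪E₁, E₂⟫_ℝ cμ cν x t • E₁ + F3 ν μ ⟪E₁, E₂⟫_ℝ cν cμ x t • E₂ :=
    fun x t => (huxxx x t).deriv
  have hut : ∀ x t : ℝ, HasDerivAt (fun s => u x s) (FT μ ν ⟪E₁, E₂⟫_ℝ cμ cν x t • E₁ + FT ν μ ⟪E₁, E₂⟫_ℝ cν cμ x t • E₂) t := by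
    intro x t
    have hfn : (fun s => u x s) = fun s => F0 μ ν ⟪E₁, E₂⟫_ℝ cμ cν x s • E₁ + F0 ν μ ⟪E₁, E₂⟫_ℝ cν cμ x s • E₂ :=
      funext fun s => hu' x s
    rw [hfn]
    exact ((F0_t μ ν ⟪E₁, E₂⟫_ℝ cμ cν x t (hD1 x t)).smul_const E₁).add
      ((F0_t ν μ ⟪E₁, E₂⟫_ℝ cν cμ x t (hD2 x t)).smul_const E₂)
  have hpdt : ∀ x t : ℝ, pdt u x t = FT μ ν ⟪E₁, E₂⟫_ℝ cμ cν x t • E₁ + FT ν μ ⟪E₁, E₂⟫_ℝ cν cμ x t • E₂ :=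
    fun x t => (hut x t).deriv
  have hnorm : ∀ x t : ℝ, ‖u x t‖ ^ 2 = (F0 μ ν ⟪E₁, E₂⟫_ℝ cμ cν x t ^ 2 + F0 ν μ ⟪E₁, E₂⟫_ℝ cν cμ x t ^ 2 + 2 * ⟪E₁, E₂⟫_ℝ * F0 μ ν ⟪E₁, E₂⟫_ℝ cμ cν x t * F0 ν μ ⟪E₁, E₂⟫_ℝ cν cμ x t) := by
    intro x t
    rw [hu' x t, norm_add_sq_real, norm_smul, norm_smul, real_inner_smul_left,
      real_inner_smul_right, hE₁, hE₂]
    simp only [Real.norm_eq_abs, mul_one, mul_pow, sq_abs, one_pow]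
    ring
  constructor
  · have hcd1 : ContDiff ℝ ∞ (fun P : ℝ × ℝ => μ * (P.1 - cμ) - μ ^ 3 * P.2) :=
      (contDiff_const.mul (contDiff_fst.sub contDiff_const)).sub (contDiff_const.mul contDiff_snd)
    have hcd2 : ContDiff ℝ ∞ (fun P : ℝ × ℝ => ν * (P.1 - cν) - ν ^ 3 * P.2) :=
      (contDiff_const.mul (contDiff_fst.sub contDiff_const)).sub (contDiff_const.mul contDiff_snd)
    have hGc : ContDiff ℝ ∞ (fun P : ℝ × ℝ => ((μ ^ 2 + ν ^ 2) * Real.cosh (μ * (P.1 - cμ) - μ ^ 3 * P.2) * Real.cosh (ν * (P.1 - cν) - ν ^ 3 * P.2)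
          - 2 * μ * ν * Real.sinh (μ * (P.1 - cμ) - μ ^ 3 * P.2) * Real.sinh (ν * (P.1 - cν) - ν ^ 3 * P.2)
          - 2 * μ * ν * ⟪E₁, E₂⟫_ℝ)) :=
      (((contDiff_const.mul hcd1.cosh).mul hcd2.cosh).sub
        ((contDiff_const.mul hcd1.sinh).mul hcd2.sinh)).sub contDiff_const
    have hGG : ∀ P : ℝ × ℝ, ((μ ^ 2 + ν ^ 2) * Real.cosh (μ * (P.1 - cμ) - μ ^ 3 * P.2) * Real.cosh (ν * (P.1 - cν) - ν ^ 3 * P.2)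
          - 2 * μ * ν * Real.sinh (μ * (P.1 - cμ) - μ ^ 3 * P.2) * Real.sinh (ν * (P.1 - cν) - ν ^ 3 * P.2)
          - 2 * μ * ν * ⟪E₁, E₂⟫_ℝ) = G P.1 P.2 := by
      intro P
      rw [hG]
      simp only [hξμ, hξν]
    have hG0' : ∀ P : ℝ × ℝ, ((μ ^ 2 + ν ^ 2) * Real.cosh (μ * (P.1 - cμ) - μ ^ 3 * P.2) * Real.cosh (ν * (P.1 - cν) - ν ^ 3 * P.2)
          - 2 * μ * ν * Real.sinh (μ * (P.1 - cμ) - μ ^ 3 * P.2) * Real.sinh (ν * (P.1 - cν) - ν ^ 3 * P.2)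
          - 2 * μ * ν * ⟪E₁, E₂⟫_ℝ) ≠ 0 := by
      intro P; rw [hGG P]; exact hG0 P.1 P.2
    have hueq : Function.uncurry u = fun P : ℝ × ℝ =>
        (2 * (ν ^ 2 - μ ^ 2) * ν * Real.cosh (μ * (P.1 - cμ) - μ ^ 3 * P.2) / ((μ ^ 2 + ν ^ 2) * Real.cosh (μ * (P.1 - cμ) - μ ^ 3 * P.2) * Real.cosh (ν * (P.1 - cν) - ν ^ 3 * P.2)
          - 2 * μ * ν * Real.sinh (μ * (P.1 - cμ) - μ ^ 3 * P.2) * Real.sinh (ν * (P.1 - cν) - ν ^ 3 * P.2)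
          - 2 * μ * ν * ⟪E₁, E₂⟫_ℝ)) • E₁
        + (2 * (μ ^ 2 - ν ^ 2) * μ * Real.cosh (ν * (P.1 - cν) - ν ^ 3 * P.2) / ((μ ^ 2 + ν ^ 2) * Real.cosh (μ * (P.1 - cμ) - μ ^ 3 * P.2) * Real.cosh (ν * (P.1 - cν) - ν ^ 3 * P.2)
          - 2 * μ * ν * Real.sinh (μ * (P.1 - cμ) - μ ^ 3 * P.2) * Real.sinh (ν * (P.1 - cν) - ν ^ 3 * P.2)
          - 2 * μ * ν * ⟪E₁, E₂⟫_ℝ)) • E₂ := by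
      funext P
      show u P.1 P.2 = _
      rw [hu]
      simp only [hFμν, hFνμ, hG, hξμ, hξν]
    rw [hueq]
    exact (((contDiff_const.mul hcd1.cosh).div hGc hG0').smul contDiff_const).add
      (((contDiff_const.mul hcd2.cosh).div hGc hG0').smul contDiff_const)
  · intro x t
    rw [hpdt x t, hpdx x t, hpdxxx x t, hnorm x t]
    have s1 := Fpde μ ν ⟪E₁, E₂⟫_ℝ cμ cν x t (hD1 x t)
    have s2 := Fpde ν μ ⟪E₁, E₂⟫_ℝ cν cμ x t (hD2 x t)
    have key1 : FT μ ν ⟪E₁, E₂⟫_ℝ cμ cν x t + 3 / 2 * (F0 μ ν ⟪E₁, E₂⟫_ℝ cμ cν x t ^ 2 + F0 ν μ ⟪E₁, E₂⟫_ℝ cν cμ x t ^ 2 + 2 * ⟪E₁, E₂⟫_ℝ * F0 μ ν ⟪E₁, E₂⟫_ℝ cμ cν x t * F0 ν μ ⟪E₁, E₂⟫_ℝ cν cμ x t) * F1 μ ν ⟪E₁, E₂⟫_ℝ cμ cν x t + F3 μ ν ⟪E₁, E₂⟫_ℝ cμ cν x t = 0 := by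
      linear_combination s1
    have key2 : FT ν μ ⟪E₁, E₂⟫_ℝ cν cμ x t + 3 / 2 * (F0 μ ν ⟪E₁, E₂⟫_ℝ cμ cν x t ^ 2 + F0 ν μ ⟪E₁, E₂⟫_ℝ cν cμ x t ^ 2 + 2 * ⟪E₁, E₂⟫_ℝ * F0 μ ν ⟪E₁, E₂⟫_ℝ cμ cν x t * F0 ν μ ⟪E₁, E₂⟫_ℝ cν cμ x t) * F1 ν μ ⟪E₁, E₂⟫_ℝ cν cμ x t + F3 ν μ ⟪E₁, E₂⟫_ℝ cν cμ x t = 0 := by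
      linear_combination s2
    have hsplit : (FT μ ν ⟪E₁, E₂⟫_ℝ cμ cν x t • E₁ + FT ν μ ⟪E₁, E₂⟫_ℝ cν cμ x t • E₂)
        + ((3 : ℝ) / 2 * (F0 μ ν ⟪E₁, E₂⟫_ℝ cμ cν x t ^ 2 + F0 ν μ ⟪E₁, E₂⟫_ℝ cν cμ x t ^ 2 + 2 * ⟪E₁, E₂⟫_ℝ * F0 μ ν ⟪E₁, E₂⟫_ℝ cμ cν x t * F0 ν μ ⟪E₁, E₂⟫_ℝ cν cμ x t)) • (F1 μ ν ⟪E₁, E₂⟫_ℝ cμ cν x t • E₁ + F1 ν μ ⟪E₁, E₂⟫_ℝ cν cμ x t • E₂)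
        + (F3 μ ν ⟪E₁, E₂⟫_ℝ cμ cν x t • E₁ + F3 ν μ ⟪E₁, E₂⟫_ℝ cν cμ x t • E₂)
        = (FT μ ν ⟪E₁, E₂⟫_ℝ cμ cν x t + 3 / 2 * (F0 μ ν ⟪E₁, E₂⟫_ℝ cμ cν x t ^ 2 + F0 ν μ ⟪E₁, E₂⟫_ℝ cν cμ x t ^ 2 + 2 * ⟪E₁, E₂⟫_ℝ * F0 μ ν ⟪E₁, E₂⟫_ℝ cμ cν x t * F0 ν μ ⟪E₁, E₂⟫_ℝ cν cμ x t) * F1 μ ν ⟪E₁, E₂⟫_ℝ cμ cν x t + F3 μ ν ⟪E₁, E₂⟫_ℝ cμ cν x t) • E₁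
          + (FT ν μ ⟪E₁, E₂⟫_ℝ cν cμ x t + 3 / 2 * (F0 μ ν ⟪E₁, E₂⟫_ℝ cμ cν x t ^ 2 + F0 ν μ ⟪E₁, E₂⟫_ℝ cν cμ x t ^ 2 + 2 * ⟪E₁, E₂⟫_ℝ * F0 μ ν ⟪E₁, E₂⟫_ℝ cμ cν x t * F0 ν μ ⟪E₁, E₂⟫_ℝ cν cμ x t) * F1 ν μ ⟪E₁, E₂⟫_ℝ cν cμ x t + F3 ν μ ⟪E₁, E₂⟫_ℝ cν cμ x t) • E₂ := by
      module
    rw [hsplit, key1, key2]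
    simp
end
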